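/- arXiv:1702.01834 — 2 statements merged into one kernel-verified Lean document; each statement's English description precedes it below -/
import Mathlib

section
/- Let k ≥ 3 be an integer and ε > 0 be fixed. If p ≤ (1−ε)·√((k−1)! · log n / n^k), then a.a.s. the random k-uniform hypergraph H_{n,p}^{(k)} does not have property 𝒯 (is not 𝒯-connected). -/
set_option linter.unusedSectionVars false
set_option linter.unusedVariables false
set_option linter.unreachableTactic false
set_option linter.unusedTactic false

open Finset Filter
open scoped Classical

def kSets (n k : ℕ) : Finset (Finset (Fin n)) := Finset.powersetCard k Finset.univ

noncomputable def prH (n k : ℕ) (p : ℝ) (P : Finset (Finset (Fin n)) → Prop) : ℝ :=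
  ∑ E ∈ (kSets n k).powerset,
    if P E then p ^ E.card * (1 - p) ^ ((kSets n k).card - E.card) else 0

noncomputable def expH (n k : ℕ) (p : ℝ) (X : Finset (Finset (Fin n)) → ℝ) : ℝ :=
  ∑ E ∈ (kSets n k).powerset,
    p ^ E.card * (1 - p) ^ ((kSets n k).card - E.card) * X E

/-- A `1`-offset `uv`-trail with `m` edges `E 0, …, E (m-1)` in the `k`-uniform
hypergraph `H`: the edges are distinct edges of `H`, successive edges meet in either
`k - 1` or `1` vertices in an alternating fashion, the first two edges share `k - 1`
vertices with `u` the vertex of `E 0` outside `E 1`, and the last two edges share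
`k - 1` vertices with `v` the vertex of `E (m-1)` outside `E (m-2)`. -/
def IsOffsetTrail {V : Type*} [DecidableEq V] (k : ℕ) (H : Finset (Finset V))
    (u v : V) (m : ℕ) (E : ℕ → Finset V) : Prop :=
  2 ≤ m ∧
  Set.InjOn E (Set.Iio m) ∧
  (∀ i < m, E i ∈ H) ∧
  (∀ i, i + 1 < m →
    (E i ∩ E (i + 1)).card = k - 1 ∨ (E i ∩ E (i + 1)).card = 1) ∧
  (∀ i, i + 2 < m →
    (E i ∩ E (i + 1)).card ≠ (E (i + 1) ∩ E (i + 2)).card) ∧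
  (E 0 ∩ E 1).card = k - 1 ∧ u ∈ E 0 ∧ u ∉ E 1 ∧
  (E (m - 2) ∩ E (m - 1)).card = k - 1 ∧ v ∈ E (m - 1) ∧ v ∉ E (m - 2)

/-- Property 𝒯: every pair of distinct vertices is joined by a `1`-offset trail. -/
def TConnected (k n : ℕ) (H : Finset (Finset (Fin n))) : Prop :=
  ∀ u v : Fin n, u ≠ v → ∃ (m : ℕ) (E : ℕ → Finset (Fin n)), IsOffsetTrail k H u v m E

namespace OffsetAux


variable {α : Type*} [DecidableEq α]

noncomputable def Ex (M : Finset α) (p : ℝ) (f : Finset α → ℝ) : ℝ :=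
  ∑ E ∈ M.powerset, p ^ E.card * (1 - p) ^ (M.card - E.card) * f E

noncomputable def Pr (M : Finset α) (p : ℝ) (P : Finset α → Prop) : ℝ :=
  Ex M p fun E => if P E then 1 else 0

lemma Ex_empty (p : ℝ) (f : Finset α → ℝ) : Ex (∅ : Finset α) p f = f ∅ := by
  simp [Ex]

lemma Ex_congr {M : Finset α} {p : ℝ} {f g : Finset α → ℝ}
    (h : ∀ E ∈ M.powerset, f E = g E) : Ex M p f = Ex M p g :=
  Finset.sum_congr rfl fun E hE => by rw [h E hE]

lemma Ex_insert {M : Finset α} {a : α} (ha : a ∉ M) (p : ℝ) (f : Finset α → ℝ) :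
    Ex (insert a M) p f = p * Ex M p (fun E => f (insert a E)) + (1 - p) * Ex M p f := by
  have hdisj : Disjoint M.powerset (M.powerset.image (insert a)) := by
    rw [Finset.disjoint_left]
    rintro E hE hE'
    obtain ⟨F, hF, rfl⟩ := Finset.mem_image.1 hE'
    exact ha (Finset.mem_powerset.1 hE (Finset.mem_insert_self a F))
  rw [Ex, Finset.powerset_insert, Finset.sum_union hdisj, Finset.sum_image ?_]
  · have h1 : ∀ E ∈ M.powerset,
        p ^ E.card * (1 - p) ^ ((insert a M).card - E.card) * f E
          = (1 - p) * (p ^ E.card * (1 - p) ^ (M.card - E.card) * f E) := by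
      intro E hE
      have hc : E.card ≤ M.card := Finset.card_le_card (Finset.mem_powerset.1 hE)
      rw [Finset.card_insert_of_notMem ha,
        show M.card + 1 - E.card = (M.card - E.card) + 1 by omega, pow_succ]
      ring
    have h2 : ∀ E ∈ M.powerset,
        p ^ (insert a E).card * (1 - p) ^ ((insert a M).card - (insert a E).card)
            * f (insert a E)
          = p * (p ^ E.card * (1 - p) ^ (M.card - E.card) * f (insert a E)) := by
      intro E hE
      have hEM := Finset.mem_powerset.1 hE
      have haE : a ∉ E := fun h => ha (hEM h)
      have hc : E.card ≤ M.card := Finset.card_le_card hEM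
      rw [Finset.card_insert_of_notMem haE, Finset.card_insert_of_notMem ha,
        show M.card + 1 - (E.card + 1) = M.card - E.card by omega, pow_succ]
      ring
    rw [Finset.sum_congr rfl h1, Finset.sum_congr rfl h2, ← Finset.mul_sum, ← Finset.mul_sum]
    rw [Ex, Ex]
    ring
  · intro E hE F hF h
    have haE : a ∉ E := fun hx => ha (Finset.mem_powerset.1 hE hx)
    have haF : a ∉ F := fun hx => ha (Finset.mem_powerset.1 hF hx)
    rw [← Finset.erase_insert haE, ← Finset.erase_insert haF, h]

lemma Ex_add (M : Finset α) (p : ℝ) (f g : Finset α → ℝ) :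
    Ex M p (fun E => f E + g E) = Ex M p f + Ex M p g := by
  simp [Ex, mul_add, Finset.sum_add_distrib]

lemma Ex_smul (M : Finset α) (p : ℝ) (c : ℝ) (f : Finset α → ℝ) :
    Ex M p (fun E => c * f E) = c * Ex M p f := by
  simp [Ex, Finset.mul_sum]; apply Finset.sum_congr rfl; intros; ring

lemma Ex_sub (M : Finset α) (p : ℝ) (f g : Finset α → ℝ) :
    Ex M p (fun E => f E - g E) = Ex M p f - Ex M p g := by
  simp [Ex, mul_sub, Finset.sum_sub_distrib]

lemma Ex_sum {ι : Type*} (M : Finset α) (p : ℝ) (s : Finset ι) (F : ι → Finset α → ℝ) :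
    Ex M p (fun E => ∑ i ∈ s, F i E) = ∑ i ∈ s, Ex M p (F i) := by
  simp [Ex, Finset.mul_sum]
  rw [Finset.sum_comm]

lemma Ex_const (M : Finset α) (p : ℝ) (c : ℝ) : Ex M p (fun _ => c) = c := by
  induction M using Finset.induction_on with
  | empty => simp [Ex_empty]
  | @insert a M ha ih => rw [Ex_insert ha]; rw [ih]; ring

lemma Ex_mono {M : Finset α} {p : ℝ} (hp0 : 0 ≤ p) (hp1 : p ≤ 1) {f g : Finset α → ℝ}
    (h : ∀ E ∈ M.powerset, f E ≤ g E) : Ex M p f ≤ Ex M p g := by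
  apply Finset.sum_le_sum
  intro E hE
  have hw : 0 ≤ p ^ E.card * (1 - p) ^ (M.card - E.card) :=
    mul_nonneg (pow_nonneg hp0 _) (pow_nonneg (by linarith) _)
  exact mul_le_mul_of_nonneg_left (h E hE) hw

lemma Pr_congr {M : Finset α} {p : ℝ} {P Q : Finset α → Prop}
    (h : ∀ E ∈ M.powerset, P E ↔ Q E) : Pr M p P = Pr M p Q := by
  apply Ex_congr
  intro E hE
  by_cases hP : P E
  · rw [if_pos hP, if_pos ((h E hE).1 hP)]
  · rw [if_neg hP, if_neg (fun hQ => hP ((h E hE).2 hQ))]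

lemma Pr_nonneg {M : Finset α} {p : ℝ} (hp0 : 0 ≤ p) (hp1 : p ≤ 1)
    (P : Finset α → Prop) : 0 ≤ Pr M p P := by
  have := Ex_mono (M := M) hp0 hp1 (f := fun _ => (0:ℝ))
    (g := fun E => if P E then (1:ℝ) else 0)
    (fun E _ => by positivity)
  rwa [Ex_const] at this

lemma Pr_true (M : Finset α) (p : ℝ) : Pr M p (fun _ => True) = 1 := by
  simp [Pr, Ex_const]

lemma Pr_mono {M : Finset α} {p : ℝ} (hp0 : 0 ≤ p) (hp1 : p ≤ 1) {P Q : Finset α → Prop}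
    (h : ∀ E ∈ M.powerset, P E → Q E) : Pr M p P ≤ Pr M p Q := by
  apply Ex_mono hp0 hp1
  intro E hE
  by_cases hP : P E
  · rw [if_pos hP, if_pos (h E hE hP)]
  · rw [if_neg hP]; positivity

lemma Pr_le_one {M : Finset α} {p : ℝ} (hp0 : 0 ≤ p) (hp1 : p ≤ 1)
    (P : Finset α → Prop) : Pr M p P ≤ 1 := by
  have := Pr_mono (M := M) hp0 hp1 (P := P) (Q := fun _ => True) (fun _ _ _ => trivial)
  rwa [Pr_true] at this

lemma Pr_not (M : Finset α) (p : ℝ) (P : Finset α → Prop) :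
    Pr M p (fun E => ¬ P E) = 1 - Pr M p P := by
  have : Pr M p (fun E => ¬ P E) = Ex M p (fun E => 1 - (if P E then 1 else 0)) := by
    apply Ex_congr; intro E _
    by_cases hP : P E <;> simp [hP]
  rw [this, Ex_sub, Ex_const]; rfl

lemma Ex_ind_eq_Pr (M : Finset α) (p : ℝ) (P : Finset α → Prop)
    [inst : ∀ E, Decidable (P E)] :
    Ex M p (fun E => if P E then (1:ℝ) else 0) = Pr M p P := by
  apply Ex_congr; intro E _; by_cases h : P E <;> simp [h]

lemma Pr_insert {M : Finset α} {a : α} (ha : a ∉ M) (p : ℝ) (P : Finset α → Prop) :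
    Pr (insert a M) p P
      = p * Pr M p (fun E => P (insert a E)) + (1 - p) * Pr M p P := by
  rw [Pr, Ex_insert ha, Ex_ind_eq_Pr M p (fun E => P (insert a E)), Ex_ind_eq_Pr M p P]

lemma Pr_and_not (M : Finset α) (p : ℝ) (P Q : Finset α → Prop) :
    Pr M p (fun E => P E ∧ ¬ Q E) = Pr M p P - Pr M p (fun E => P E ∧ Q E) := by
  have h : Pr M p P
      = Pr M p (fun E => P E ∧ ¬ Q E) + Pr M p (fun E => P E ∧ Q E) := by
    rw [Pr, Pr, Pr, ← Ex_add]
    apply Ex_congr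
    intro E _
    by_cases hP : P E <;> by_cases hQ : Q E <;> simp [hP, hQ]
  linarith

lemma Pr_subset {M : Finset α} (p : ℝ) {D : Finset α} (hD : D ⊆ M) :
    Pr M p (fun E => D ⊆ E) = p ^ D.card := by
  induction M using Finset.induction_on generalizing D with
  | empty =>
    rw [Finset.subset_empty.1 hD]
    simp [Pr, Ex]
  | @insert a M ha ih =>
    rw [Pr_insert ha]
    by_cases haD : a ∈ D
    · have h1 : Pr M p (fun E => D ⊆ insert a E) = Pr M p (fun E => D.erase a ⊆ E) :=
        Pr_congr fun E _ => Finset.subset_insert_iff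
      have h2 : Pr M p (fun E => D ⊆ E) = 0 := by
        have : Pr M p (fun E => D ⊆ E) = Pr M p (fun _ => False) := by
          apply Pr_congr
          intro E hE
          simp only [iff_false]
          exact fun hDE => ha (Finset.mem_powerset.1 hE (hDE haD))
        rw [this, Pr, Ex_congr (g := fun _ => (0:ℝ)) (fun E _ => by simp), Ex_const]
      have herase : D.erase a ⊆ M := by
        intro x hx
        have := hD (Finset.mem_of_mem_erase hx)
        rcases Finset.mem_insert.1 this with h | h
        · exact absurd h (Finset.ne_of_mem_erase hx)
        · exact h
      rw [h1, h2, ih herase, Finset.card_erase_of_mem haD, mul_zero, add_zero, ← pow_succ']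
      congr 1
      have : 1 ≤ D.card := Finset.card_pos.2 ⟨a, haD⟩
      omega
    · have h1 : Pr M p (fun E => D ⊆ insert a E) = Pr M p (fun E => D ⊆ E) := by
        apply Pr_congr
        intro E _
        rw [Finset.subset_insert_iff, Finset.erase_eq_of_notMem haD]
      have hDM : D ⊆ M := fun x hx => by
        rcases Finset.mem_insert.1 (hD hx) with h | h
        · exact absurd (h ▸ hx) haD
        · exact h
      rw [h1, ih hDM]
      ring

/-- `P` only depends on the edges inside `T`. -/
def DepOn (P : Finset α → Prop) (T : Finset α) : Prop :=
  ∀ E F : Finset α, E ∩ T = F ∩ T → (P E ↔ P F)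

lemma DepOn.insert_comp {P : Finset α → Prop} {T : Finset α} (h : DepOn P T) (a : α) :
    DepOn (fun E => P (insert a E)) T := by
  intro E F hEF
  apply h
  by_cases haT : a ∈ T
  · rw [Finset.insert_inter_of_mem haT, Finset.insert_inter_of_mem haT, hEF]
  · rw [Finset.insert_inter_of_notMem haT, Finset.insert_inter_of_notMem haT, hEF]

lemma DepOn.insert_iff {P : Finset α → Prop} {T : Finset α} (h : DepOn P T) {a : α}
    (ha : a ∉ T) (E : Finset α) : P (insert a E) ↔ P E := by
  apply h
  rw [Finset.insert_inter_of_notMem ha]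

lemma Pr_indep {T₁ T₂ : Finset α} (p : ℝ) (hT : Disjoint T₁ T₂) :
    ∀ (M : Finset α) (P Q : Finset α → Prop), DepOn P T₁ → DepOn Q T₂ →
    Pr M p (fun E => P E ∧ Q E) = Pr M p P * Pr M p Q := by
  intro M
  induction M using Finset.induction_on with
  | empty =>
    intro P Q _ _
    simp [Pr, Ex]
    by_cases hP : P ∅ <;> by_cases hQ : Q ∅ <;> simp [hP, hQ]
  | @insert a M ha ih =>
    intro P Q hP hQ
    rw [Pr_insert ha, Pr_insert ha p P, Pr_insert ha p Q]
    by_cases haT : a ∈ T₂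
    · have haT1 : a ∉ T₁ := fun h => (Finset.disjoint_left.1 hT h) haT
      have e1 : Pr M p (fun E => P (insert a E) ∧ Q (insert a E))
          = Pr M p (fun E => P E ∧ Q (insert a E)) :=
        Pr_congr fun E _ => and_congr_left fun _ => hP.insert_iff haT1 E
      have e2 : Pr M p (fun E => P (insert a E)) = Pr M p P :=
        Pr_congr fun E _ => hP.insert_iff haT1 E
      rw [e1, e2, ih P (fun E => Q (insert a E)) hP (hQ.insert_comp a),
        ih P Q hP hQ]
      ring
    · have e1 : Pr M p (fun E => P (insert a E) ∧ Q (insert a E))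
          = Pr M p (fun E => P (insert a E) ∧ Q E) :=
        Pr_congr fun E _ => and_congr_right fun _ => hQ.insert_iff haT E
      have e2 : Pr M p (fun E => Q (insert a E)) = Pr M p Q :=
        Pr_congr fun E _ => hQ.insert_iff haT E
      rw [e1, e2, ih (fun E => P (insert a E)) Q (hP.insert_comp a) hQ,
        ih P Q hP hQ]
      ring

lemma Ex_harris {p : ℝ} (hp0 : 0 ≤ p) (hp1 : p ≤ 1) (M : Finset α) :
    ∀ (f g : Finset α → ℝ), (∀ E F : Finset α, E ⊆ F → f E ≤ f F) →
    (∀ E F : Finset α, E ⊆ F → g E ≤ g F) →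
    Ex M p f * Ex M p g ≤ Ex M p (fun E => f E * g E) := by
  induction M using Finset.induction_on with
  | empty => intro f g _ _; simp [Ex_empty]
  | @insert a M ha ih =>
    intro f g hf hg
    rw [Ex_insert ha, Ex_insert ha, Ex_insert ha]
    set F1 := Ex M p (fun E => f (insert a E)) with hF1
    set F0 := Ex M p f with hF0
    set G1 := Ex M p (fun E => g (insert a E)) with hG1
    set G0 := Ex M p g with hG0
    have h1 : F1 * G1 ≤ Ex M p (fun E => f (insert a E) * g (insert a E)) :=
      ih _ _ (fun E F h => hf _ _ (Finset.insert_subset_insert a h))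
        (fun E F h => hg _ _ (Finset.insert_subset_insert a h))
    have h0 : F0 * G0 ≤ Ex M p (fun E => f E * g E) := ih f g hf hg
    have hF : F0 ≤ F1 := Ex_mono hp0 hp1 fun E _ => hf _ _ (Finset.subset_insert a E)
    have hG : G0 ≤ G1 := Ex_mono hp0 hp1 fun E _ => hg _ _ (Finset.subset_insert a E)
    have key : (p * F1 + (1 - p) * F0) * (p * G1 + (1 - p) * G0)
        ≤ p * (F1 * G1) + (1 - p) * (F0 * G0) := by nlinarith [mul_nonneg (sub_nonneg.2 hF) (sub_nonneg.2 hG), mul_nonneg hp0 (sub_nonneg.2 hp1)]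
    calc (p * F1 + (1 - p) * F0) * (p * G1 + (1 - p) * G0)
        ≤ p * (F1 * G1) + (1 - p) * (F0 * G0) := key
      _ ≤ p * Ex M p (fun E => f (insert a E) * g (insert a E))
            + (1 - p) * Ex M p (fun E => f E * g E) := by
          apply add_le_add
          · exact mul_le_mul_of_nonneg_left h1 hp0
          · exact mul_le_mul_of_nonneg_left h0 (by linarith)

lemma Pr_harris_updown {p : ℝ} (hp0 : 0 ≤ p) (hp1 : p ≤ 1) (M : Finset α)
    (P Q : Finset α → Prop) (hP : ∀ E F : Finset α, E ⊆ F → P E → P F)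
    (hQ : ∀ E F : Finset α, E ⊆ F → Q F → Q E) :
    Pr M p (fun E => P E ∧ Q E) ≤ Pr M p P * Pr M p Q := by
  set f : Finset α → ℝ := fun E => if P E then 1 else 0 with hf
  set g : Finset α → ℝ := fun E => 1 - (if Q E then 1 else 0) with hg
  have hfmono : ∀ E F : Finset α, E ⊆ F → f E ≤ f F := by
    intro E F h
    by_cases hE : P E
    · simp [hf, hE, hP E F h hE]
    · simp only [hf, if_neg hE]; positivity
  have hgmono : ∀ E F : Finset α, E ⊆ F → g E ≤ g F := by
    intro E F h
    by_cases hF : Q F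
    · simp [hg, hF, hQ E F h hF]
    · by_cases hE : Q E <;> simp [hg, hF, hE] <;> norm_num
  have harris := Ex_harris hp0 hp1 M f g hfmono hgmono
  have e1 : Ex M p f = Pr M p P := rfl
  have e2 : Ex M p g = 1 - Pr M p Q := by
    rw [hg]
    have : Ex M p (fun E => 1 - (if Q E then (1:ℝ) else 0))
        = Ex M p (fun _ => 1) - Ex M p (fun E => if Q E then (1:ℝ) else 0) := Ex_sub ..
    rw [this, Ex_const]
    rfl
  have e3 : Ex M p (fun E => f E * g E)
      = Pr M p P - Pr M p (fun E => P E ∧ Q E) := by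
    rw [← Pr_and_not]
    rw [Pr]
    apply Ex_congr
    intro E _
    by_cases h1 : P E <;> by_cases h2 : Q E <;> simp [hf, hg, h1, h2]
  rw [e1, e2, e3] at harris
  have hPle : Pr M p P ≤ 1 := Pr_le_one hp0 hp1 P
  nlinarith

lemma Pr_union_bound {p : ℝ} (hp0 : 0 ≤ p) (hp1 : p ≤ 1) (M : Finset α)
    {ι : Type*} (s : Finset ι) (A : ι → Finset α → Prop) (P Q : Finset α → Prop)
    (h : ∀ E ∈ M.powerset, P E → Q E ∨ ∃ j ∈ s, A j E) :
    Pr M p P ≤ Pr M p Q + ∑ j ∈ s, Pr M p (A j) := by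
  have key : Pr M p P ≤ Ex M p (fun E =>
      (if Q E then (1:ℝ) else 0) + ∑ j ∈ s, (if A j E then (1:ℝ) else 0)) := by
    apply Ex_mono hp0 hp1
    intro E hE
    by_cases hP : P E
    · rcases h E hE hP with hQ | ⟨j, hj, hAj⟩
      · rw [if_pos hP, if_pos hQ]
        have : (0:ℝ) ≤ ∑ j ∈ s, (if A j E then (1:ℝ) else 0) :=
          Finset.sum_nonneg fun j _ => by positivity
        linarith
      · rw [if_pos hP]
        have h1 : (1:ℝ) ≤ ∑ j ∈ s, (if A j E then (1:ℝ) else 0) := by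
          have := Finset.single_le_sum (f := fun j => if A j E then (1:ℝ) else 0)
            (fun j _ => by positivity) hj
          simpa [hAj] using this
        have h2 : (0:ℝ) ≤ (if Q E then (1:ℝ) else 0) := by positivity
        linarith
    · rw [if_neg hP]
      have h1 : (0:ℝ) ≤ ∑ j ∈ s, (if A j E then (1:ℝ) else 0) :=
        Finset.sum_nonneg fun j _ => by positivity
      have h2 : (0:ℝ) ≤ (if Q E then (1:ℝ) else 0) := by positivity
      linarith
  rw [Ex_add, Ex_sum] at key
  exact key

lemma depOn_subset (D : Finset α) : DepOn (fun E => D ⊆ E) D := by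
  intro E F h
  constructor
  · intro hDE
    intro x hx
    have : x ∈ E ∩ D := Finset.mem_inter.2 ⟨hDE hx, hx⟩
    rw [h] at this
    exact (Finset.mem_inter.1 this).1
  · intro hDF
    intro x hx
    have : x ∈ F ∩ D := Finset.mem_inter.2 ⟨hDF hx, hx⟩
    rw [← h] at this
    exact (Finset.mem_inter.1 this).1

lemma depOn_forall_not_subset {ι : Type*} (s : Finset ι) (D : ι → Finset α) :
    DepOn (fun E => ∀ j ∈ s, ¬ D j ⊆ E) (s.sup D) := by
  intro E F h
  have key : ∀ j ∈ s, (D j ⊆ E ↔ D j ⊆ F) := by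
    intro j hj
    have hsub : D j ⊆ s.sup D := Finset.le_sup hj
    exact depOn_subset (D j) E F (by
      ext x
      simp only [Finset.mem_inter]
      constructor
      · rintro ⟨hxE, hxD⟩
        have : x ∈ F ∩ s.sup D := by
          rw [← h]; exact Finset.mem_inter.2 ⟨hxE, hsub hxD⟩
        exact ⟨(Finset.mem_inter.1 this).1, hxD⟩
      · rintro ⟨hxF, hxD⟩
        have : x ∈ E ∩ s.sup D := by
          rw [h]; exact Finset.mem_inter.2 ⟨hxF, hsub hxD⟩
        exact ⟨(Finset.mem_inter.1 this).1, hxD⟩)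
  constructor
  · intro hall j hj hsub
    exact hall j hj ((key j hj).2 hsub)
  · intro hall j hj hsub
    exact hall j hj ((key j hj).1 hsub)

lemma janson {p : ℝ} (hp0 : 0 ≤ p) (hp1 : p ≤ 1) (M : Finset α)
    {ι : Type*} [DecidableEq ι] (I : Finset ι) (D : ι → Finset α)
    (hDM : ∀ i ∈ I, D i ⊆ M) :
    Pr M p (fun E => ∀ i ∈ I, ¬ D i ⊆ E)
      ≤ Real.exp (-(∑ i ∈ I, p ^ (D i).card)
          + ∑ i ∈ I, ∑ j ∈ I.filter (fun j => j ≠ i ∧ ¬ Disjoint (D i) (D j)),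
              p ^ (D i ∪ D j).card) := by
  induction I using Finset.induction_on with
  | empty =>
    simp only [Finset.notMem_empty, false_implies, implies_true, Finset.sum_empty]
    rw [Pr_true]
    simp
  | @insert i I' hi ih =>
    have ihB := ih (fun j hj => hDM j (Finset.mem_insert_of_mem hj))
    set Dep := I'.filter (fun j => ¬ Disjoint (D i) (D j)) with hDep
    set Ind := I'.filter (fun j => Disjoint (D i) (D j)) with hInd
    set r : ℝ := p ^ (D i).card - ∑ j ∈ Dep, p ^ (D i ∪ D j).card with hr
    have hDiM : D i ⊆ M := hDM i (Finset.mem_insert_self i I')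
    -- (a) decomposition
    have ha : Pr M p (fun E => ∀ j ∈ insert i I', ¬ D j ⊆ E)
        = Pr M p (fun E => ∀ j ∈ I', ¬ D j ⊆ E)
          - Pr M p (fun E => (∀ j ∈ I', ¬ D j ⊆ E) ∧ D i ⊆ E) := by
      rw [← Pr_and_not]
      apply Pr_congr
      intro E _
      simp only [Finset.forall_mem_insert]
      tauto
    -- (b2') pointwise union bound
    have hb2 : Pr M p (fun E => D i ⊆ E ∧ ∀ j ∈ Ind, ¬ D j ⊆ E)
        ≤ Pr M p (fun E => (∀ j ∈ I', ¬ D j ⊆ E) ∧ D i ⊆ E)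
          + ∑ j ∈ Dep, Pr M p (fun E => (D i ∪ D j ⊆ E) ∧ ∀ l ∈ Ind, ¬ D l ⊆ E) := by
      apply Pr_union_bound hp0 hp1 M Dep
        (fun j E => (D i ∪ D j ⊆ E) ∧ ∀ l ∈ Ind, ¬ D l ⊆ E)
      intro E _ hPE
      by_cases hall : ∀ j ∈ I', ¬ D j ⊆ E
      · exact Or.inl ⟨hall, hPE.1⟩
      · push_neg at hall
        obtain ⟨j, hj, hsub⟩ := hall
        refine Or.inr ⟨j, ?_, Finset.union_subset hPE.1 hsub, hPE.2⟩
        rw [hDep, Finset.mem_filter]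
        refine ⟨hj, fun hdisj => ?_⟩
        exact hPE.2 j (by rw [hInd, Finset.mem_filter]; exact ⟨hj, hdisj⟩) hsub
    -- (b1) independence
    have hb1 : Pr M p (fun E => D i ⊆ E ∧ ∀ j ∈ Ind, ¬ D j ⊆ E)
        = p ^ (D i).card * Pr M p (fun E => ∀ j ∈ Ind, ¬ D j ⊆ E) := by
      have hdisj : Disjoint (D i) (Ind.sup D) := by
        rw [Finset.disjoint_sup_right]
        intro j hj
        exact (Finset.mem_filter.1 hj).2
      rw [Pr_indep p hdisj M _ _ (depOn_subset (D i)) (depOn_forall_not_subset Ind D),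
        Pr_subset p hDiM]
    -- (b3') Harris
    have hb3 : ∀ j ∈ Dep, Pr M p (fun E => (D i ∪ D j ⊆ E) ∧ ∀ l ∈ Ind, ¬ D l ⊆ E)
        ≤ p ^ (D i ∪ D j).card * Pr M p (fun E => ∀ l ∈ Ind, ¬ D l ⊆ E) := by
      intro j hj
      have hjM : D j ⊆ M := hDM j (Finset.mem_insert_of_mem (Finset.mem_filter.1 hj).1)
      have := Pr_harris_updown hp0 hp1 M (fun E => D i ∪ D j ⊆ E)
        (fun E => ∀ l ∈ Ind, ¬ D l ⊆ E)
        (fun E F hEF h => h.trans hEF)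
        (fun E F hEF h l hl hsub => h l hl (hsub.trans hEF))
      rwa [Pr_subset p (Finset.union_subset hDiM hjM)] at this
    -- monotonicity
    have hmono : Pr M p (fun E => ∀ j ∈ I', ¬ D j ⊆ E)
        ≤ Pr M p (fun E => ∀ j ∈ Ind, ¬ D j ⊆ E) := by
      apply Pr_mono hp0 hp1
      intro E _ h j hj
      exact h j (Finset.mem_filter.1 hj).1
    -- (b) conclusion
    have hb : r * Pr M p (fun E => ∀ j ∈ I', ¬ D j ⊆ E)
        ≤ Pr M p (fun E => (∀ j ∈ I', ¬ D j ⊆ E) ∧ D i ⊆ E) := by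
      have hsum : ∑ j ∈ Dep, Pr M p (fun E => (D i ∪ D j ⊆ E) ∧ ∀ l ∈ Ind, ¬ D l ⊆ E)
          ≤ (∑ j ∈ Dep, p ^ (D i ∪ D j).card)
              * Pr M p (fun E => ∀ l ∈ Ind, ¬ D l ⊆ E) := by
        rw [Finset.sum_mul]
        exact Finset.sum_le_sum hb3
      have key : r * Pr M p (fun E => ∀ j ∈ Ind, ¬ D j ⊆ E)
          ≤ Pr M p (fun E => (∀ j ∈ I', ¬ D j ⊆ E) ∧ D i ⊆ E) := by
        rw [hr, sub_mul]
        have := hb2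
        rw [hb1] at this
        linarith
      rcases le_or_gt 0 r with hr0 | hr0
      · calc r * Pr M p (fun E => ∀ j ∈ I', ¬ D j ⊆ E)
            ≤ r * Pr M p (fun E => ∀ j ∈ Ind, ¬ D j ⊆ E) :=
              mul_le_mul_of_nonneg_left hmono hr0
          _ ≤ _ := key
      · have h1 : r * Pr M p (fun E => ∀ j ∈ I', ¬ D j ⊆ E) ≤ 0 :=
          mul_nonpos_of_nonpos_of_nonneg hr0.le (Pr_nonneg hp0 hp1 _)
        exact h1.trans (Pr_nonneg hp0 hp1 _)
    -- combine
    have hrle : r ≤ 1 := by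
      have h1 : p ^ (D i).card ≤ 1 := pow_le_one₀ hp0 hp1
      have h2 : (0:ℝ) ≤ ∑ j ∈ Dep, p ^ (D i ∪ D j).card :=
        Finset.sum_nonneg fun j _ => pow_nonneg hp0 _
      rw [hr]; linarith
    have hstep : Pr M p (fun E => ∀ j ∈ insert i I', ¬ D j ⊆ E)
        ≤ (1 - r) * Pr M p (fun E => ∀ j ∈ I', ¬ D j ⊆ E) := by
      rw [ha]; nlinarith [hb]
    have hPI'nonneg := Pr_nonneg (M := M) hp0 hp1 (fun E => ∀ j ∈ I', ¬ D j ⊆ E)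
    have hexp : (1 - r) ≤ Real.exp (-r) := by
      have := Real.add_one_le_exp (-r)
      linarith
    have hfinal : Pr M p (fun E => ∀ j ∈ insert i I', ¬ D j ⊆ E)
        ≤ Real.exp (-r) * Real.exp (-(∑ i ∈ I', p ^ (D i).card)
          + ∑ i' ∈ I', ∑ j ∈ I'.filter (fun j => j ≠ i' ∧ ¬ Disjoint (D i') (D j)),
              p ^ (D i' ∪ D j).card) := by
      calc Pr M p (fun E => ∀ j ∈ insert i I', ¬ D j ⊆ E)
          ≤ (1 - r) * Pr M p (fun E => ∀ j ∈ I', ¬ D j ⊆ E) := hstep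
        _ ≤ Real.exp (-r) * Pr M p (fun E => ∀ j ∈ I', ¬ D j ⊆ E) :=
            mul_le_mul_of_nonneg_right hexp hPI'nonneg
        _ ≤ _ := mul_le_mul_of_nonneg_left ihB (Real.exp_nonneg _)
    rw [← Real.exp_add] at hfinal
    apply hfinal.trans
    apply Real.exp_le_exp.2
    -- exponent arithmetic
    have hsumI : ∑ j ∈ insert i I', p ^ (D j).card
        = p ^ (D i).card + ∑ j ∈ I', p ^ (D j).card := Finset.sum_insert hi
    have hDelta : ∑ j ∈ Dep, p ^ (D i ∪ D j).card
          + ∑ i' ∈ I', ∑ j ∈ I'.filter (fun j => j ≠ i' ∧ ¬ Disjoint (D i') (D j)),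
              p ^ (D i' ∪ D j).card
        ≤ ∑ i' ∈ insert i I',
            ∑ j ∈ (insert i I').filter (fun j => j ≠ i' ∧ ¬ Disjoint (D i') (D j)),
              p ^ (D i' ∪ D j).card := by
      rw [Finset.sum_insert hi]
      apply add_le_add
      · apply Finset.sum_le_sum_of_subset_of_nonneg
        · intro j hj
          rw [Finset.mem_filter] at hj ⊢
          refine ⟨Finset.mem_insert_of_mem hj.1, fun h => hi (h ▸ hj.1), hj.2⟩
        · intro j _ _
          exact pow_nonneg hp0 _
      · apply Finset.sum_le_sum
        intro i' _
        apply Finset.sum_le_sum_of_subset_of_nonneg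
        · intro j hj
          rw [Finset.mem_filter] at hj ⊢
          exact ⟨Finset.mem_insert_of_mem hj.1, hj.2⟩
        · intro j _ _
          exact pow_nonneg hp0 _
    rw [hsumI, hr]
    linarith

lemma Pr_harris_downdown {p : ℝ} (hp0 : 0 ≤ p) (hp1 : p ≤ 1) (M : Finset α)
    (P Q : Finset α → Prop) (hP : ∀ E F : Finset α, E ⊆ F → P F → P E)
    (hQ : ∀ E F : Finset α, E ⊆ F → Q F → Q E) :
    Pr M p P * Pr M p Q ≤ Pr M p (fun E => P E ∧ Q E) := by
  set f : Finset α → ℝ := fun E => 1 - (if P E then 1 else 0) with hf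
  set g : Finset α → ℝ := fun E => 1 - (if Q E then 1 else 0) with hg
  have hfmono : ∀ E F : Finset α, E ⊆ F → f E ≤ f F := by
    intro E F h
    by_cases hF : P F
    · simp [hf, hF, hP E F h hF]
    · by_cases hE : P E <;> simp [hf, hF, hE]
  have hgmono : ∀ E F : Finset α, E ⊆ F → g E ≤ g F := by
    intro E F h
    by_cases hF : Q F
    · simp [hg, hF, hQ E F h hF]
    · by_cases hE : Q E <;> simp [hg, hF, hE]
  have harris := Ex_harris hp0 hp1 M f g hfmono hgmono
  have e1 : Ex M p f = 1 - Pr M p P := by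
    have : Ex M p f = Ex M p (fun _ => 1) - Ex M p (fun E => if P E then (1:ℝ) else 0) :=
      Ex_sub ..
    rw [this, Ex_const]; rfl
  have e2 : Ex M p g = 1 - Pr M p Q := by
    have : Ex M p g = Ex M p (fun _ => 1) - Ex M p (fun E => if Q E then (1:ℝ) else 0) :=
      Ex_sub ..
    rw [this, Ex_const]; rfl
  have e3 : Ex M p (fun E => f E * g E)
      = (1 - Pr M p P) - (Pr M p Q - Pr M p (fun E => P E ∧ Q E)) := by
    have step1 : Ex M p (fun E => f E * g E)
        = Ex M p (fun E => ((1:ℝ) - (if P E then 1 else 0))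
            - ((if Q E then (1:ℝ) else 0) - (if P E ∧ Q E then 1 else 0))) := by
      apply Ex_congr
      intro E _
      by_cases h1 : P E <;> by_cases h2 : Q E <;> simp [hf, hg, h1, h2]
    rw [step1, Ex_sub, Ex_sub, Ex_sub, Ex_const, Ex_ind_eq_Pr, Ex_ind_eq_Pr, Ex_ind_eq_Pr]
  rw [e1, e2, e3] at harris
  nlinarith

lemma Pr_prod_lower {p : ℝ} (hp0 : 0 ≤ p) (hp1 : p ≤ 1) (M : Finset α)
    {ι : Type*} [DecidableEq ι] (I : Finset ι) (D : ι → Finset α)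
    (hDM : ∀ i ∈ I, D i ⊆ M) :
    ∏ i ∈ I, (1 - p ^ (D i).card) ≤ Pr M p (fun E => ∀ i ∈ I, ¬ D i ⊆ E) := by
  induction I using Finset.induction_on with
  | empty => simp [Pr_true]
  | @insert i I' hi ih =>
    have ihB := ih (fun j hj => hDM j (Finset.mem_insert_of_mem hj))
    have e0 : Pr M p (fun E => ∀ j ∈ insert i I', ¬ D j ⊆ E)
        = Pr M p (fun E => (¬ D i ⊆ E) ∧ ∀ j ∈ I', ¬ D j ⊆ E) := by
      apply Pr_congr
      intro E _
      simp only [Finset.forall_mem_insert]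
    have harris := Pr_harris_downdown hp0 hp1 M (fun E => ¬ D i ⊆ E)
      (fun E => ∀ j ∈ I', ¬ D j ⊆ E)
      (fun E F hEF h hsub => h (hsub.trans hEF))
      (fun E F hEF h j hj hsub => h j hj (hsub.trans hEF))
    have hnot : Pr M p (fun E => ¬ D i ⊆ E) = 1 - p ^ (D i).card := by
      rw [Pr_not, Pr_subset p (hDM i (Finset.mem_insert_self i I'))]
    rw [Finset.prod_insert hi, e0]
    have h1 : (0:ℝ) ≤ 1 - p ^ (D i).card := by
      have : p ^ (D i).card ≤ 1 := pow_le_one₀ hp0 hp1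
      linarith
    calc (1 - p ^ (D i).card) * ∏ j ∈ I', (1 - p ^ (D j).card)
        ≤ (1 - p ^ (D i).card) * Pr M p (fun E => ∀ j ∈ I', ¬ D j ⊆ E) :=
          mul_le_mul_of_nonneg_left ihB h1
      _ = Pr M p (fun E => ¬ D i ⊆ E) * Pr M p (fun E => ∀ j ∈ I', ¬ D j ⊆ E) := by
          rw [hnot]
      _ ≤ _ := harris

lemma Pr_second_moment {p : ℝ} (hp0 : 0 ≤ p) (hp1 : p ≤ 1) (M : Finset α)
    {ι : Type*} (s : Finset ι) (A : ι → Finset α → Prop)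
    (hc : 0 < ∑ u ∈ s, Pr M p (A u)) :
    Pr M p (fun E => ∀ u ∈ s, ¬ A u E) * (∑ u ∈ s, Pr M p (A u)) ^ 2
      ≤ (∑ u ∈ s, ∑ v ∈ s, Pr M p (fun E => A u E ∧ A v E))
          - (∑ u ∈ s, Pr M p (A u)) ^ 2 := by
  set X : Finset α → ℝ := fun E => ∑ u ∈ s, (if A u E then 1 else 0) with hX
  set c : ℝ := ∑ u ∈ s, Pr M p (A u) with hc'
  have hEX : Ex M p X = c := by
    rw [hX, Ex_sum, hc']
    apply Finset.sum_congr rfl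
    intro u _
    exact Ex_ind_eq_Pr M p (A u)
  have hEX2 : Ex M p (fun E => X E ^ 2)
      = ∑ u ∈ s, ∑ v ∈ s, Pr M p (fun E => A u E ∧ A v E) := by
    have e1 : (fun E => X E ^ 2)
        = fun E => ∑ u ∈ s, ∑ v ∈ s, (if A u E ∧ A v E then (1:ℝ) else 0) := by
      funext E
      rw [hX, sq, Finset.sum_mul_sum]
      apply Finset.sum_congr rfl
      intro u _
      apply Finset.sum_congr rfl
      intro v _
      by_cases h1 : A u E <;> by_cases h2 : A v E <;> simp [h1, h2]
    rw [e1, Ex_sum]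
    apply Finset.sum_congr rfl
    intro u _
    rw [Ex_sum]
    apply Finset.sum_congr rfl
    intro v _
    exact Ex_ind_eq_Pr M p _
  have key : Ex M p (fun E => (if (∀ u ∈ s, ¬ A u E) then (1:ℝ) else 0) * c ^ 2)
      ≤ Ex M p (fun E => (X E - c) ^ 2) := by
    apply Ex_mono hp0 hp1
    intro E _
    by_cases hZ : ∀ u ∈ s, ¬ A u E
    · rw [if_pos hZ, one_mul]
      have hX0 : X E = 0 := by
        rw [hX]
        apply Finset.sum_eq_zero
        intro u hu
        rw [if_neg (hZ u hu)]
      rw [hX0]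
      ring_nf
      exact le_refl _
    · rw [if_neg hZ, zero_mul]
      positivity
  have lhs_eq : Ex M p (fun E => (if (∀ u ∈ s, ¬ A u E) then (1:ℝ) else 0) * c ^ 2)
      = Pr M p (fun E => ∀ u ∈ s, ¬ A u E) * c ^ 2 := by
    have e : (fun E => (if (∀ u ∈ s, ¬ A u E) then (1:ℝ) else 0) * c ^ 2)
        = fun E => c ^ 2 * (if (∀ u ∈ s, ¬ A u E) then (1:ℝ) else 0) := by
      funext E; ring
    rw [e, Ex_smul, Ex_ind_eq_Pr]
    ring
  have rhs_eq : Ex M p (fun E => (X E - c) ^ 2)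
      = Ex M p (fun E => X E ^ 2) - c ^ 2 := by
    have e : (fun E => (X E - c) ^ 2)
        = fun E => (X E ^ 2 - (2 * c) * X E) + c ^ 2 := by
      funext E; ring
    rw [e, Ex_add, Ex_sub, Ex_const]
    have : Ex M p (fun E => 2 * c * X E) = 2 * c * Ex M p X := Ex_smul ..
    rw [this, hEX]
    ring
  rw [lhs_eq, rhs_eq, hEX2] at key
  linarith
def kSets' (n k : ℕ) : Finset (Finset (Fin n)) := Finset.powersetCard k Finset.univ

variable (n k : ℕ)

def cherryIdx (u : Fin n) : Finset (Finset (Fin n) × Fin n) :=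
  (Finset.powersetCard (k-1) Finset.univ ×ˢ Finset.univ).filter
    (fun Sw => u ∉ Sw.1 ∧ Sw.2 ∉ Sw.1 ∧ Sw.2 ≠ u)

def cherryD (u : Fin n) (Sw : Finset (Fin n) × Fin n) : Finset (Finset (Fin n)) :=
  {insert u Sw.1, insert Sw.2 Sw.1}

def Cherryless (u : Fin n) (E : Finset (Finset (Fin n))) : Prop :=
  ∀ i ∈ cherryIdx n k u, ¬ cherryD n u i ⊆ E

lemma cherryD_subset_kSets (hk : 1 ≤ k) (u : Fin n) {i : Finset (Fin n) × Fin n}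
    (hi : i ∈ cherryIdx n k u) : cherryD n u i ⊆ kSets' n k := by
  obtain ⟨hmem, hu, hw, hwu⟩ := Finset.mem_filter.1 hi
  have hS : i.1.card = k - 1 := (Finset.mem_powersetCard.1 (Finset.mem_product.1 hmem).1).2
  intro e he
  rw [cherryD, Finset.mem_insert, Finset.mem_singleton] at he
  rw [kSets', Finset.mem_powersetCard]
  rcases he with rfl | rfl
  · exact ⟨Finset.subset_univ _, by rw [Finset.card_insert_of_notMem hu, hS]; omega⟩
  · exact ⟨Finset.subset_univ _, by rw [Finset.card_insert_of_notMem hw, hS]; omega⟩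

lemma cherryD_card (u : Fin n) {i : Finset (Fin n) × Fin n}
    (hi : i ∈ cherryIdx n k u) : (cherryD n u i).card = 2 := by
  obtain ⟨hmem, hu, hw, hwu⟩ := Finset.mem_filter.1 hi
  rw [cherryD, Finset.card_insert_of_notMem, Finset.card_singleton]
  rw [Finset.mem_singleton]
  intro h
  have : u ∈ insert i.2 i.1 := h ▸ Finset.mem_insert_self u i.1
  rcases Finset.mem_insert.1 this with h' | h'
  · exact hwu h'.symm
  · exact hu h'

lemma cherryIdx_card_le (u : Fin n) :
    (cherryIdx n k u).card ≤ (n.choose (k-1)) * n := by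
  calc (cherryIdx n k u).card
      ≤ (Finset.powersetCard (k-1) (Finset.univ : Finset (Fin n)) ×ˢ Finset.univ).card :=
        Finset.card_filter_le _ _
    _ = (n.choose (k-1)) * n := by
        simp [Finset.card_product, Finset.card_powersetCard]

/-- From a trail out of `u`, extract a cherry at `u`. -/
lemma exists_cherry_of_trail {H : Finset (Finset (Fin n))} (hH : H ⊆ kSets' n k)
    (hk : 2 ≤ k) {u v : Fin n} {m : ℕ} {E : ℕ → Finset (Fin n)}
    (ht : IsOffsetTrail k H u v m E) :
    ∃ i ∈ cherryIdx n k u, cherryD n u i ⊆ H := by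
  obtain ⟨hm, hinj, hmemH, _, _, hcard01, huE0, huE1, _⟩ := ht
  have hE0 : E 0 ∈ H := hmemH 0 (by omega)
  have hE1 : E 1 ∈ H := hmemH 1 (by omega)
  have hE0k : (E 0).card = k := (Finset.mem_powersetCard.1 (hH hE0)).2
  have hE1k : (E 1).card = k := (Finset.mem_powersetCard.1 (hH hE1)).2
  set S := (E 0).erase u with hS
  have hScard : S.card = k - 1 := by rw [hS, Finset.card_erase_of_mem huE0, hE0k]
  have hinter : E 0 ∩ E 1 = S := by
    apply Finset.eq_of_subset_of_card_le
    · intro x hx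
      rw [hS, Finset.mem_erase]
      have hx' := Finset.mem_inter.1 hx
      exact ⟨fun h => huE1 (h ▸ hx'.2), hx'.1⟩
    · rw [hScard, hcard01]
  have hSsub1 : S ⊆ E 1 := by
    rw [← hinter]; exact Finset.inter_subset_right
  have hSsub0 : S ⊆ E 0 := Finset.erase_subset _ _
  have hdiff : (E 1 \ S).card = 1 := by
    rw [Finset.card_sdiff_of_subset hSsub1, hE1k, hScard]; omega
  obtain ⟨w, hw⟩ := Finset.card_eq_one.1 hdiff
  have hwE1 : w ∈ E 1 := by
    have : w ∈ E 1 \ S := hw ▸ Finset.mem_singleton_self w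
    exact (Finset.mem_sdiff.1 this).1
  have hwS : w ∉ S := by
    have : w ∈ E 1 \ S := hw ▸ Finset.mem_singleton_self w
    exact (Finset.mem_sdiff.1 this).2
  have hE1eq : E 1 = insert w S := by
    apply Finset.eq_of_subset_of_card_le
    · intro x hx
      by_cases hxS : x ∈ S
      · exact Finset.mem_insert_of_mem hxS
      · have : x ∈ E 1 \ S := Finset.mem_sdiff.2 ⟨hx, hxS⟩
        rw [hw, Finset.mem_singleton] at this
        rw [this]; exact Finset.mem_insert_self w S
    · rw [Finset.card_insert_of_notMem hwS, hE1k, hScard]; omega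
  have hE0eq : E 0 = insert u S := by
    rw [hS, Finset.insert_erase huE0]
  have huS : u ∉ S := by rw [hS]; exact Finset.notMem_erase u (E 0)
  have hwu : w ≠ u := fun h => huE1 (h ▸ hwE1)
  refine ⟨(S, w), ?_, ?_⟩
  · rw [cherryIdx, Finset.mem_filter, Finset.mem_product]
    exact ⟨⟨Finset.mem_powersetCard.2 ⟨Finset.subset_univ _, hScard⟩,
      Finset.mem_univ _⟩, huS, hwS, hwu⟩
  · rw [cherryD]
    intro e he
    rcases Finset.mem_insert.1 he with rfl | h
    · exact hE0eq ▸ hE0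
    · rw [Finset.mem_singleton] at h
      rw [h, ← hE1eq]
      exact hE1

lemma not_TConnected_of_cherryless (hk : 2 ≤ k) (hn : 2 ≤ n)
    {H : Finset (Finset (Fin n))} (hH : H ⊆ kSets' n k) (u : Fin n)
    (hcl : Cherryless n k u H) : ¬ TConnected k n H := by
  intro hT
  have : Nontrivial (Fin n) := by
    rw [Fin.nontrivial_iff_two_le]; exact hn
  obtain ⟨v, hv⟩ := exists_ne u
  obtain ⟨m, E, ht⟩ := hT u v (Ne.symm hv)
  obtain ⟨i, hi, hsub⟩ := exists_cherry_of_trail n k hH hk ht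
  exact hcl i hi hsub


def cherryIdxR (u v : Fin n) : Finset (Finset (Fin n) × Fin n) :=
  (cherryIdx n k u).filter (fun Sw => v ∉ Sw.1 ∧ Sw.2 ≠ v)

def vert (u v : Fin n) (t : Bool) : Fin n := if t then v else u

def cherryIdx2 (u v : Fin n) : Finset ((Finset (Fin n) × Fin n) × Bool) :=
  (cherryIdxR n k u v) ×ˢ {false} ∪ (cherryIdxR n k v u) ×ˢ {true}

def cherryD2 (u v : Fin n) (x : (Finset (Fin n) × Fin n) × Bool) : Finset (Finset (Fin n)) :=
  cherryD n (vert n u v x.2) x.1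

lemma mem_cherryIdx2_iff {u v : Fin n} {x : (Finset (Fin n) × Fin n) × Bool} :
    x ∈ cherryIdx2 n k u v ↔
      ((x.2 = false ∧ x.1 ∈ cherryIdxR n k u v) ∨ (x.2 = true ∧ x.1 ∈ cherryIdxR n k v u)) := by
  rw [cherryIdx2, Finset.mem_union, Finset.mem_product, Finset.mem_product,
    Finset.mem_singleton, Finset.mem_singleton]
  tauto

lemma cherryIdx2_spec {u v : Fin n} (huv : u ≠ v) {x : (Finset (Fin n) × Fin n) × Bool}
    (hx : x ∈ cherryIdx2 n k u v) :
    x.1 ∈ cherryIdx n k (vert n u v x.2) ∧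
    x.1.1.card = k - 1 ∧ vert n u v x.2 ∉ x.1.1 ∧ x.1.2 ∉ x.1.1 ∧
    x.1.2 ≠ vert n u v x.2 ∧ vert n u v (!x.2) ∉ x.1.1 ∧ x.1.2 ≠ vert n u v (!x.2) := by
  rcases (mem_cherryIdx2_iff n k).1 hx with ⟨ht, hR⟩ | ⟨ht, hR⟩ <;>
  · obtain ⟨hidx, hother, hwother⟩ := Finset.mem_filter.1 hR
    obtain ⟨hmem, hnotS, hwS, hwne⟩ := Finset.mem_filter.1 hidx
    have hScard : x.1.1.card = k - 1 :=
      (Finset.mem_powersetCard.1 (Finset.mem_product.1 hmem).1).2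
    rw [ht]
    exact ⟨hidx, hScard, hnotS, hwS, hwne, hother, hwother⟩

lemma cherryD2_card {u v : Fin n} (huv : u ≠ v) {x : (Finset (Fin n) × Fin n) × Bool}
    (hx : x ∈ cherryIdx2 n k u v) : (cherryD2 n u v x).card = 2 :=
  cherryD_card n k (vert n u v x.2) ((cherryIdx2_spec n k huv hx).1)

lemma cherryD2_subset_kSets (hk : 1 ≤ k) {u v : Fin n} (huv : u ≠ v)
    {x : (Finset (Fin n) × Fin n) × Bool} (hx : x ∈ cherryIdx2 n k u v) :
    cherryD2 n u v x ⊆ kSets' n k :=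
  cherryD_subset_kSets n k hk (vert n u v x.2) ((cherryIdx2_spec n k huv hx).1)

/-- the other vertex avoids both edges of a restricted cherry -/
lemma other_not_mem_cherryD2 {u v : Fin n} (huv : u ≠ v)
    {x : (Finset (Fin n) × Fin n) × Bool} (hx : x ∈ cherryIdx2 n k u v)
    {e : Finset (Fin n)} (he : e ∈ cherryD2 n u v x) : vert n u v (!x.2) ∉ e := by
  obtain ⟨_, _, _, _, _, hbS, hwb⟩ := cherryIdx2_spec n k huv hx
  have hab : vert n u v (!x.2) ≠ vert n u v x.2 := by
    cases x.2 <;> simp [vert] <;> [exact huv.symm; exact huv]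
  rw [cherryD2, cherryD, Finset.mem_insert, Finset.mem_singleton] at he
  rcases he with rfl | rfl <;> rw [Finset.mem_insert]
  · rintro (h | h)
    · exact hab h
    · exact hbS h
  · rintro (h | h)
    · exact hwb h.symm
    · exact hbS h

lemma designated_mem {u v : Fin n} (huv : u ≠ v)
    {x : (Finset (Fin n) × Fin n) × Bool} (hx : x ∈ cherryIdx2 n k u v) :
    vert n u v x.2 ∈ insert (vert n u v x.2) x.1.1 ∧
    vert n u v x.2 ∉ insert x.1.2 x.1.1 := by
  obtain ⟨_, _, haS, _, hwa, _, _⟩ := cherryIdx2_spec n k huv hx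
  refine ⟨Finset.mem_insert_self _ _, ?_⟩
  rw [Finset.mem_insert]
  rintro (h | h)
  · exact hwa h.symm
  · exact haS h

lemma cherryD2_injOn {u v : Fin n} (huv : u ≠ v)
    {x y : (Finset (Fin n) × Fin n) × Bool} (hx : x ∈ cherryIdx2 n k u v)
    (hy : y ∈ cherryIdx2 n k u v) (hD : cherryD2 n u v x = cherryD2 n u v y) : x = y := by
  obtain ⟨_, _, haSx, hwSx, hwax, _, _⟩ := cherryIdx2_spec n k huv hx
  obtain ⟨_, _, haSy, hwSy, hway, _, _⟩ := cherryIdx2_spec n k huv hy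
  -- tags must agree
  have htag : x.2 = y.2 := by
    by_contra hne
    have hvy : vert n u v y.2 = vert n u v (!x.2) := by
      cases hx2 : x.2 <;> cases hy2 : y.2 <;> simp_all
    have hmem : insert (vert n u v y.2) y.1.1 ∈ cherryD2 n u v x := by
      rw [hD, cherryD2, cherryD]; exact Finset.mem_insert_self _ _
    have := other_not_mem_cherryD2 n k huv hx hmem
    rw [hvy] at this
    exact this (Finset.mem_insert_self _ _)
  set a := vert n u v x.2 with hadef
  have hay : vert n u v y.2 = a := by rw [hadef, htag]
  rw [hay] at haSy hway
  -- first edges agree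
  have hAy : insert a y.1.1 ∈ cherryD2 n u v x := by
    rw [hD, cherryD2, cherryD, hay]
    exact Finset.mem_insert_self _ _
  rw [cherryD2, cherryD, Finset.mem_insert, Finset.mem_singleton, ← hadef] at hAy
  have hS : y.1.1 = x.1.1 := by
    rcases hAy with h | h
    · have := congrArg (fun s => Finset.erase s a) h
      simpa [Finset.erase_insert haSy, Finset.erase_insert haSx] using this
    · exfalso
      have : a ∈ insert x.1.2 x.1.1 := h ▸ Finset.mem_insert_self a y.1.1
      rw [Finset.mem_insert] at this
      rcases this with h' | h'
      · exact hwax h'.symm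
      · exact haSx h'
  -- second edges agree
  have hBy : insert y.1.2 y.1.1 ∈ cherryD2 n u v x := by
    rw [hD, cherryD2, cherryD, hay]
    exact Finset.mem_insert_of_mem (Finset.mem_singleton_self _)
  rw [cherryD2, cherryD, Finset.mem_insert, Finset.mem_singleton, ← hadef] at hBy
  have hw : y.1.2 = x.1.2 := by
    rcases hBy with h | h
    · exfalso
      have : a ∈ insert y.1.2 y.1.1 := h ▸ Finset.mem_insert_self a x.1.1
      rw [Finset.mem_insert] at this
      rcases this with h' | h'
      · exact hway h'.symm
      · exact haSy h'
    · have : y.1.2 ∈ insert x.1.2 x.1.1 := h ▸ Finset.mem_insert_self y.1.2 y.1.1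
      rw [Finset.mem_insert] at this
      rcases this with h' | h'
      · exact h'
      · rw [hS] at hwSy; exact absurd h' hwSy
  have : x.1 = y.1 := Prod.ext (hS.symm) (hw.symm)
  exact Prod.ext this.symm htag.symm |>.symm

lemma card_union_of_card_two {β : Type*} [DecidableEq β] {A B : Finset β}
    (hA : A.card = 2) (hB : B.card = 2) (hne : A ≠ B) (hnd : ¬ Disjoint A B) :
    (A ∪ B).card = 3 := by
  have hinter : (A ∩ B).Nonempty := Finset.not_disjoint_iff_nonempty_inter.1 hnd
  have h1 : 1 ≤ (A ∩ B).card := Finset.card_pos.2 hinter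
  have h2 : (A ∩ B).card ≤ 1 := by
    by_contra hgt
    push_neg at hgt
    have hsub : A ∩ B ⊆ A := Finset.inter_subset_left
    have : A ∩ B = A := Finset.eq_of_subset_of_card_le hsub (by omega)
    have hAB : A ⊆ B := by
      rw [← this]; exact Finset.inter_subset_right
    exact hne (Finset.eq_of_subset_of_card_le hAB (by omega))
  have := Finset.card_union_add_card_inter A B
  omega

lemma dep_card_le {u v : Fin n} (huv : u ≠ v) {i : (Finset (Fin n) × Fin n) × Bool}
    (hi : i ∈ cherryIdx2 n k u v) :
    ((cherryIdx2 n k u v).filter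
      (fun j => j ≠ i ∧ ¬ Disjoint (cherryD2 n u v i) (cherryD2 n u v j))).card
      ≤ 8 * n := by
  classical
  set A := insert (vert n u v i.2) i.1.1 with hA
  set B := insert i.1.2 i.1.1 with hB
  have hDi : cherryD2 n u v i = {A, B} := rfl
  set T := (cherryIdx2 n k u v).filter
      (fun j => j ≠ i ∧ ¬ Disjoint (cherryD2 n u v i) (cherryD2 n u v j)) with hT
  set ej : ((Finset (Fin n) × Fin n) × Bool) → Finset (Fin n) :=
    fun j => if A ∈ cherryD2 n u v j then A else B with hej
  have hejmem : ∀ j ∈ T, ej j ∈ cherryD2 n u v j := by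
    intro j hj
    obtain ⟨hjI, hjne, hjnd⟩ := Finset.mem_filter.1 hj
    by_cases hAj : A ∈ cherryD2 n u v j
    · rw [hej]; simpa [hAj]
    · have hnd' : (cherryD2 n u v i ∩ cherryD2 n u v j).Nonempty := by
        rwa [Finset.not_disjoint_iff_nonempty_inter] at hjnd
      obtain ⟨e, he⟩ := hnd'
      have he1 : e ∈ cherryD2 n u v i := (Finset.mem_inter.1 he).1
      have he2 : e ∈ cherryD2 n u v j := (Finset.mem_inter.1 he).2
      rw [hDi, Finset.mem_insert, Finset.mem_singleton] at he1
      rcases he1 with rfl | rfl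
      · exact absurd he2 hAj
      · rw [hej]; simpa [hAj] using he2
  have hinj : Set.InjOn (fun j => (decide (A ∈ cherryD2 n u v j),
      decide (insert (vert n u v j.2) j.1.1 = ej j), j.2, j.1.2))
      (T : Set ((Finset (Fin n) × Fin n) × Bool)) := by
    intro j hj j' hj' heq
    simp only [Prod.mk.injEq] at heq
    obtain ⟨hd1, hd2, ht, hw⟩ := heq
    have hjT : j ∈ T := hj
    have hj'T : j' ∈ T := hj'
    obtain ⟨hjI, _, _⟩ := Finset.mem_filter.1 hjT
    obtain ⟨hj'I, _, _⟩ := Finset.mem_filter.1 hj'T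
    obtain ⟨_, _, haSj, hwSj, _, _, _⟩ := cherryIdx2_spec n k huv hjI
    obtain ⟨_, _, haSj', hwSj', _, _, _⟩ := cherryIdx2_spec n k huv hj'I
    have hee : ej j = ej j' := by
      rw [hej]
      simp only
      rw [decide_eq_decide] at hd1
      by_cases h : A ∈ cherryD2 n u v j
      · rw [if_pos h, if_pos (hd1.1 h)]
      · rw [if_neg h, if_neg (fun h' => h (hd1.2 h'))]
    rw [decide_eq_decide] at hd2
    have hvert : vert n u v j.2 = vert n u v j'.2 := by rw [ht]
    by_cases hcase : insert (vert n u v j.2) j.1.1 = ej j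
    · have hcase' : insert (vert n u v j'.2) j'.1.1 = ej j' := hd2.1 hcase
      have : insert (vert n u v j.2) j.1.1 = insert (vert n u v j'.2) j'.1.1 := by
        rw [hcase, hcase', hee]
      rw [hvert] at this
      have hSS : j.1.1 = j'.1.1 := by
        have := congrArg (fun s => Finset.erase s (vert n u v j'.2)) this
        rw [hvert] at haSj
        simpa [Finset.erase_insert haSj, Finset.erase_insert haSj'] using this
      have : j.1 = j'.1 := Prod.ext hSS hw
      exact Prod.ext this ht
    · have hcase' : insert (vert n u v j'.2) j'.1.1 ≠ ej j' :=
        fun h => hcase (hd2.2 h)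
      -- shared edge must be the second edge
      have h1 : ej j = insert j.1.2 j.1.1 := by
        have := hejmem j hjT
        rw [cherryD2, cherryD, Finset.mem_insert, Finset.mem_singleton] at this
        rcases this with h | h
        · exact absurd h.symm hcase
        · exact h
      have h2 : ej j' = insert j'.1.2 j'.1.1 := by
        have := hejmem j' hj'T
        rw [cherryD2, cherryD, Finset.mem_insert, Finset.mem_singleton] at this
        rcases this with h | h
        · exact absurd h.symm hcase'
        · exact h
      have : insert j.1.2 j.1.1 = insert j'.1.2 j'.1.1 := by
        rw [← h1, ← h2, hee]
      rw [hw] at this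
      have hSS : j.1.1 = j'.1.1 := by
        have := congrArg (fun s => Finset.erase s j'.1.2) this
        rw [hw] at hwSj
        simpa [Finset.erase_insert hwSj, Finset.erase_insert hwSj'] using this
      have : j.1 = j'.1 := Prod.ext hSS hw
      exact Prod.ext this ht
  have := Finset.card_le_card_of_injOn _ (fun j _ => Finset.mem_univ _) hinj
  calc T.card ≤ (Finset.univ : Finset (Bool × Bool × Bool × Fin n)).card := this
    _ = 8 * n := by simp; ring

lemma cherryIdxR_card_le (u v : Fin n) :
    (cherryIdxR n k u v).card ≤ (cherryIdx n k u).card :=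
  Finset.card_filter_le _ _

lemma choose_le_pow' (m r : ℕ) : m.choose r ≤ m ^ r := by
  have h1 : m.choose r ≤ m.descFactorial r := by
    rw [Nat.descFactorial_eq_factorial_mul_choose]
    calc m.choose r = 1 * m.choose r := (one_mul _).symm
      _ ≤ r.factorial * m.choose r :=
        Nat.mul_le_mul_right _ (Nat.one_le_iff_ne_zero.2 r.factorial_ne_zero)
  exact h1.trans (Nat.descFactorial_le_pow m r)

lemma cherryIdx_loss (u v : Fin n) :
    (cherryIdx n k u).card
      ≤ (cherryIdxR n k u v).card + (n.choose (k-2) * n + n.choose (k-1)) := by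
  classical
  have hsplit := Finset.card_filter_add_card_filter_not
    (s := cherryIdx n k u) (p := fun Sw => v ∉ Sw.1 ∧ Sw.2 ≠ v)
  have hbad : ((cherryIdx n k u).filter (fun Sw => ¬(v ∉ Sw.1 ∧ Sw.2 ≠ v))).card
      ≤ n.choose (k-2) * n + n.choose (k-1) := by
    have hsub : (cherryIdx n k u).filter (fun Sw => ¬(v ∉ Sw.1 ∧ Sw.2 ≠ v))
        ⊆ ((cherryIdx n k u).filter (fun Sw => v ∈ Sw.1))
          ∪ ((cherryIdx n k u).filter (fun Sw => Sw.2 = v)) := by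
      intro Sw hSw
      rw [Finset.mem_filter] at hSw
      rw [Finset.mem_union, Finset.mem_filter, Finset.mem_filter]
      push_neg at hSw
      obtain ⟨hmem, hcond⟩ := hSw
      by_cases hvS : v ∈ Sw.1
      · exact Or.inl ⟨hmem, hvS⟩
      · exact Or.inr ⟨hmem, hcond hvS⟩
    have h1 : ((cherryIdx n k u).filter (fun Sw => v ∈ Sw.1)).card
        ≤ n.choose (k-2) * n := by
      have hinj : Set.InjOn (fun Sw : Finset (Fin n) × Fin n => (Sw.1.erase v, Sw.2))
          ((cherryIdx n k u).filter (fun Sw => v ∈ Sw.1) : Set (Finset (Fin n) × Fin n)) := by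
        intro x hx y hy hxy
        simp only [Finset.coe_filter, Set.mem_setOf_eq] at hx hy
        simp only [Prod.mk.injEq] at hxy
        have hx1 : x.1 = y.1 := by
          rw [← Finset.insert_erase hx.2, ← Finset.insert_erase hy.2, hxy.1]
        exact Prod.ext hx1 hxy.2
      have hmaps : ∀ Sw ∈ (cherryIdx n k u).filter (fun Sw => v ∈ Sw.1),
          (Sw.1.erase v, Sw.2) ∈
            Finset.powersetCard (k-2) (Finset.univ : Finset (Fin n)) ×ˢ Finset.univ := by
        intro Sw hSw
        rw [Finset.mem_filter] at hSw
        obtain ⟨hmem, hvS⟩ := hSw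
        obtain ⟨hprod, _⟩ := Finset.mem_filter.1 hmem
        have hScard : Sw.1.card = k - 1 :=
          (Finset.mem_powersetCard.1 (Finset.mem_product.1 hprod).1).2
        rw [Finset.mem_product, Finset.mem_powersetCard]
        refine ⟨⟨Finset.subset_univ _, ?_⟩, Finset.mem_univ _⟩
        rw [Finset.card_erase_of_mem hvS, hScard]
        omega
      calc ((cherryIdx n k u).filter (fun Sw => v ∈ Sw.1)).card
          ≤ (Finset.powersetCard (k-2) (Finset.univ : Finset (Fin n)) ×ˢ
              (Finset.univ : Finset (Fin n))).card :=
            Finset.card_le_card_of_injOn _ hmaps hinj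
        _ = n.choose (k-2) * n := by simp [Finset.card_product, Finset.card_powersetCard]
    have h2 : ((cherryIdx n k u).filter (fun Sw => Sw.2 = v)).card
        ≤ n.choose (k-1) := by
      have hinj : Set.InjOn (fun Sw : Finset (Fin n) × Fin n => Sw.1)
          ((cherryIdx n k u).filter (fun Sw => Sw.2 = v) : Set (Finset (Fin n) × Fin n)) := by
        intro x hx y hy hxy
        simp only [Finset.coe_filter, Set.mem_setOf_eq] at hx hy
        exact Prod.ext hxy (hx.2.trans hy.2.symm)
      have hmaps : ∀ Sw ∈ (cherryIdx n k u).filter (fun Sw => Sw.2 = v),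
          Sw.1 ∈ Finset.powersetCard (k-1) (Finset.univ : Finset (Fin n)) := by
        intro Sw hSw
        rw [Finset.mem_filter] at hSw
        exact (Finset.mem_product.1 (Finset.mem_filter.1 hSw.1).1).1
      calc ((cherryIdx n k u).filter (fun Sw => Sw.2 = v)).card
          ≤ (Finset.powersetCard (k-1) (Finset.univ : Finset (Fin n))).card :=
            Finset.card_le_card_of_injOn _ hmaps hinj
        _ = n.choose (k-1) := by simp [Finset.card_powersetCard]
    calc ((cherryIdx n k u).filter (fun Sw => ¬(v ∉ Sw.1 ∧ Sw.2 ≠ v))).card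
        ≤ (((cherryIdx n k u).filter (fun Sw => v ∈ Sw.1))
            ∪ ((cherryIdx n k u).filter (fun Sw => Sw.2 = v))).card :=
          Finset.card_le_card hsub
      _ ≤ _ := (Finset.card_union_le _ _).trans (by omega)
  rw [cherryIdxR]
  omega

lemma cherryIdx2_card (u v : Fin n) :
    (cherryIdx2 n k u v).card = (cherryIdxR n k u v).card + (cherryIdxR n k v u).card := by
  rw [cherryIdx2, Finset.card_union_of_disjoint, Finset.card_product, Finset.card_product]
  · simp
  · rw [Finset.disjoint_left]
    rintro x hx hy
    rw [Finset.mem_product, Finset.mem_singleton] at hx hy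
    rw [hx.2] at hy
    exact Bool.false_ne_true hy.2

lemma forall_not_of_cherryless {u v : Fin n} {E : Finset (Finset (Fin n))}
    (hu : Cherryless n k u E) (hv : Cherryless n k v E) :
    ∀ i ∈ cherryIdx2 n k u v, ¬ cherryD2 n u v i ⊆ E := by
  intro i hi hsub
  rcases (mem_cherryIdx2_iff n k).1 hi with ⟨ht, hR⟩ | ⟨ht, hR⟩
  · have hmem : i.1 ∈ cherryIdx n k u := (Finset.mem_filter.1 hR).1
    apply hu i.1 hmem
    rw [cherryD2, ht] at hsub
    simpa [vert] using hsub
  · have hmem : i.1 ∈ cherryIdx n k v := (Finset.mem_filter.1 hR).1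
    apply hv i.1 hmem
    rw [cherryD2, ht] at hsub
    simpa [vert] using hsub

lemma Pr_cherryless_lower (hk : 1 ≤ k) {p : ℝ} (hp0 : 0 ≤ p) (hp1 : p ≤ 1) (u : Fin n) :
    (1 - p^2) ^ (n.choose (k-1) * n) ≤ Pr (kSets' n k) p (Cherryless n k u) := by
  have h1 : ∏ i ∈ cherryIdx n k u, (1 - p ^ (cherryD n u i).card)
      ≤ Pr (kSets' n k) p (fun E => ∀ i ∈ cherryIdx n k u, ¬ cherryD n u i ⊆ E) :=
    Pr_prod_lower hp0 hp1 _ _ _ (fun i hi => cherryD_subset_kSets n k hk u hi)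
  have h2 : ∏ i ∈ cherryIdx n k u, (1 - p ^ (cherryD n u i).card)
      = (1 - p^2) ^ (cherryIdx n k u).card := by
    rw [Finset.prod_congr rfl (fun i hi => by rw [cherryD_card n k u hi]), Finset.prod_const]
  have h3 : (1 - p^2) ^ (n.choose (k-1) * n) ≤ (1 - p^2) ^ (cherryIdx n k u).card :=
    pow_le_pow_of_le_one (by nlinarith) (by nlinarith) (cherryIdx_card_le n k u)
  have h4 : Pr (kSets' n k) p (Cherryless n k u)
      = Pr (kSets' n k) p (fun E => ∀ i ∈ cherryIdx n k u, ¬ cherryD n u i ⊆ E) :=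
    Pr_congr (fun E _ => Iff.rfl)
  rw [h4]
  calc (1 - p^2) ^ (n.choose (k-1) * n) ≤ (1 - p^2) ^ (cherryIdx n k u).card := h3
    _ = ∏ i ∈ cherryIdx n k u, (1 - p ^ (cherryD n u i).card) := h2.symm
    _ ≤ _ := h1

lemma Pr_pair_upper (hk : 1 ≤ k) {p : ℝ} (hp0 : 0 ≤ p) (hp1 : p ≤ 1) {u v : Fin n}
    (huv : u ≠ v) :
    Pr (kSets' n k) p (fun E => Cherryless n k u E ∧ Cherryless n k v E)
      ≤ Real.exp (-(((cherryIdx2 n k u v).card : ℝ) * p^2)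
          + ((cherryIdx2 n k u v).card : ℝ) * (8*n) * p^3) := by
  have hmono : Pr (kSets' n k) p (fun E => Cherryless n k u E ∧ Cherryless n k v E)
      ≤ Pr (kSets' n k) p (fun E => ∀ i ∈ cherryIdx2 n k u v, ¬ cherryD2 n u v i ⊆ E) :=
    Pr_mono hp0 hp1 (fun E _ h => forall_not_of_cherryless n k h.1 h.2)
  have hjan := janson hp0 hp1 (kSets' n k) (cherryIdx2 n k u v) (cherryD2 n u v)
    (fun i hi => cherryD2_subset_kSets n k hk huv hi)
  have hsum1 : ∑ i ∈ cherryIdx2 n k u v, p ^ (cherryD2 n u v i).card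
      = ((cherryIdx2 n k u v).card : ℝ) * p^2 := by
    rw [Finset.sum_congr rfl (fun i hi => by rw [cherryD2_card n k huv hi]),
      Finset.sum_const, nsmul_eq_mul]
  have hsum2 : ∑ i ∈ cherryIdx2 n k u v,
        ∑ j ∈ (cherryIdx2 n k u v).filter
          (fun j => j ≠ i ∧ ¬ Disjoint (cherryD2 n u v i) (cherryD2 n u v j)),
          p ^ (cherryD2 n u v i ∪ cherryD2 n u v j).card
      ≤ ((cherryIdx2 n k u v).card : ℝ) * (8*n) * p^3 := by
    have hinner : ∀ i ∈ cherryIdx2 n k u v,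
        ∑ j ∈ (cherryIdx2 n k u v).filter
          (fun j => j ≠ i ∧ ¬ Disjoint (cherryD2 n u v i) (cherryD2 n u v j)),
          p ^ (cherryD2 n u v i ∪ cherryD2 n u v j).card ≤ (8*n : ℝ) * p^3 := by
      intro i hi
      have hterm : ∀ j ∈ (cherryIdx2 n k u v).filter
          (fun j => j ≠ i ∧ ¬ Disjoint (cherryD2 n u v i) (cherryD2 n u v j)),
          p ^ (cherryD2 n u v i ∪ cherryD2 n u v j).card = p^3 := by
        intro j hj
        obtain ⟨hjI, hjne, hjnd⟩ := Finset.mem_filter.1 hj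
        have hDne : cherryD2 n u v i ≠ cherryD2 n u v j := by
          intro h
          exact hjne (cherryD2_injOn n k huv hjI hi h.symm)
        rw [card_union_of_card_two (cherryD2_card n k huv hi) (cherryD2_card n k huv hjI)
          hDne hjnd]
      rw [Finset.sum_congr rfl hterm, Finset.sum_const, nsmul_eq_mul]
      have hcard := dep_card_le n k huv hi
      have hp3 : (0:ℝ) ≤ p^3 := by positivity
      calc (((cherryIdx2 n k u v).filter
            (fun j => j ≠ i ∧ ¬ Disjoint (cherryD2 n u v i) (cherryD2 n u v j))).card : ℝ)
            * p^3
          ≤ ((8*n : ℕ) : ℝ) * p^3 := by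
            apply mul_le_mul_of_nonneg_right _ hp3
            exact_mod_cast hcard
        _ = (8*n : ℝ) * p^3 := by push_cast; ring
    calc ∑ i ∈ cherryIdx2 n k u v, ∑ j ∈ (cherryIdx2 n k u v).filter
          (fun j => j ≠ i ∧ ¬ Disjoint (cherryD2 n u v i) (cherryD2 n u v j)),
          p ^ (cherryD2 n u v i ∪ cherryD2 n u v j).card
        ≤ ∑ _i ∈ cherryIdx2 n k u v, (8*n : ℝ) * p^3 := Finset.sum_le_sum hinner
      _ = ((cherryIdx2 n k u v).card : ℝ) * ((8*n:ℝ) * p^3) := by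
          rw [Finset.sum_const, nsmul_eq_mul]
      _ = ((cherryIdx2 n k u v).card : ℝ) * (8*n) * p^3 := by ring
  apply hmono.trans
  apply hjan.trans
  apply Real.exp_le_exp.2
  rw [hsum1]
  linarith

lemma Pr_cherryless_lower' (hk : 1 ≤ k) {p : ℝ} (hp0 : 0 ≤ p) (hp1 : p ≤ 1) (u : Fin n) :
    (1 - p^2) ^ (cherryIdx n k u).card ≤ Pr (kSets' n k) p (Cherryless n k u) := by
  have h1 : ∏ i ∈ cherryIdx n k u, (1 - p ^ (cherryD n u i).card)
      ≤ Pr (kSets' n k) p (fun E => ∀ i ∈ cherryIdx n k u, ¬ cherryD n u i ⊆ E) :=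
    Pr_prod_lower hp0 hp1 _ _ _ (fun i hi => cherryD_subset_kSets n k hk u hi)
  have h2 : ∏ i ∈ cherryIdx n k u, (1 - p ^ (cherryD n u i).card)
      = (1 - p^2) ^ (cherryIdx n k u).card := by
    rw [Finset.prod_congr rfl (fun i hi => by rw [cherryD_card n k u hi]), Finset.prod_const]
  have h4 : Pr (kSets' n k) p (Cherryless n k u)
      = Pr (kSets' n k) p (fun E => ∀ i ∈ cherryIdx n k u, ¬ cherryD n u i ⊆ E) :=
    Pr_congr (fun E _ => Iff.rfl)
  rw [h4, ← h2]
  exact h1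

set_option maxHeartbeats 1600000 in
lemma master (hk : 3 ≤ k) (hn : 2 ≤ n) {p : ℝ} (hp0 : 0 ≤ p) (hp2 : p^2 ≤ 1/2) :
    1 - (1 / ((n:ℝ) * (1 - p^2) ^ (n.choose (k-1) * n))
        + (Real.exp (16 * ((n.choose (k-1) * n : ℕ):ℝ) * n * p^3
            + 4 * (n:ℝ)^(k-1) * p^2 + 4 * ((n.choose (k-1) * n : ℕ):ℝ) * p^4) - 1))
      ≤ Pr (kSets' n k) p (fun E => ¬ TConnected k n E) := by
  classical
  have hp1 : p ≤ 1 := by nlinarith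
  have hq : 0 < 1 - p^2 := by nlinarith
  set Mb : ℕ := n.choose (k-1) * n with hMb
  set M := kSets' n k with hM
  set A : Fin n → Finset (Finset (Fin n)) → Prop := fun u => Cherryless n k u with hA
  set ℓ : ℝ := (1 - p^2) ^ Mb with hℓ
  have hℓpos : 0 < ℓ := pow_pos hq _
  set η : ℝ := 16 * (Mb:ℝ) * n * p^3 + 4*(n:ℝ)^(k-1)*p^2 + 4*(Mb:ℝ)*p^4 with hη
  have hη0 : 0 ≤ η := by
    rw [hη]
    have h1 : (0:ℝ) ≤ (Mb:ℝ) := Nat.cast_nonneg _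
    have h2 : (0:ℝ) ≤ (n:ℝ) := Nat.cast_nonneg _
    positivity
  have hexpη1 : 1 ≤ Real.exp η := Real.one_le_exp hη0
  have hsingle : ∀ u : Fin n, ℓ ≤ Pr M p (A u) := fun u =>
    Pr_cherryless_lower n k (by omega) hp0 hp1 u
  have hsingle' : ∀ u : Fin n, (1-p^2) ^ (cherryIdx n k u).card ≤ Pr M p (A u) := fun u =>
    Pr_cherryless_lower' n k (by omega) hp0 hp1 u
  set c : ℝ := ∑ u ∈ Finset.univ, Pr M p (A u) with hc
  have hnpos : (0:ℝ) < n := by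
    have : (2:ℝ) ≤ n := by exact_mod_cast hn
    linarith
  have hcl : (n:ℝ) * ℓ ≤ c := by
    rw [hc]
    calc (n:ℝ) * ℓ = ∑ _u ∈ (Finset.univ : Finset (Fin n)), ℓ := by
          rw [Finset.sum_const, Finset.card_univ, Fintype.card_fin, nsmul_eq_mul]
      _ ≤ _ := Finset.sum_le_sum (fun u _ => hsingle u)
  have hcpos : 0 < c := lt_of_lt_of_le (by positivity) hcl
  -- pair bound
  have hpair : ∀ u v : Fin n, u ≠ v →
      Pr M p (fun E => A u E ∧ A v E) ≤ Real.exp η * (Pr M p (A u) * Pr M p (A v)) := by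
    intro u v huv
    have hup := Pr_pair_upper n k (by omega) hp0 hp1 huv
    set I2 : ℕ := (cherryIdx2 n k u v).card with hI2
    set Iu : ℕ := (cherryIdx n k u).card with hIu
    set Iv : ℕ := (cherryIdx n k v).card with hIv
    have hlog : -(p^2 + 2*p^4) ≤ Real.log (1 - p^2) := by
      have h1 : Real.log (1 - p^2)⁻¹ ≤ (1-p^2)⁻¹ - 1 :=
        Real.log_le_sub_one_of_pos (by positivity)
      rw [Real.log_inv] at h1
      have h3 : (1-p^2)⁻¹ - 1 ≤ p^2 + 2*p^4 := by
        rw [inv_eq_one_div, div_sub' (ne_of_gt hq), div_le_iff₀ hq]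
        have haux : (0:ℝ) ≤ p^4*(1-2*p^2) := mul_nonneg (by positivity) (by linarith)
        nlinarith [haux]
      linarith
    -- counting (ℕ)
    have hcount1 : Iu + Iv ≤ I2 + 4 * n^(k-1) := by
      have l1 := cherryIdx_loss n k u v
      have l2 := cherryIdx_loss n k v u
      have e1 := choose_le_pow' n (k-2)
      have e2 := choose_le_pow' n (k-1)
      have hpow : n^(k-2) * n = n^(k-1) := by
        rw [← pow_succ]; congr 1; omega
      have e3 : n.choose (k-2) * n ≤ n^(k-1) := by
        calc n.choose (k-2) * n ≤ n^(k-2) * n := Nat.mul_le_mul_right _ e1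
          _ = n^(k-1) := hpow
      have hI2card := cherryIdx2_card n k u v
      rw [hIu, hIv, hI2, hI2card]
      omega
    have hcu : Iu ≤ Mb := cherryIdx_card_le n k u
    have hcv : Iv ≤ Mb := cherryIdx_card_le n k v
    have hI2le : I2 ≤ 2 * Mb := by
      have hI2card := cherryIdx2_card n k u v
      have r1 := cherryIdxR_card_le n k u v
      have r2 := cherryIdxR_card_le n k v u
      rw [hI2, hI2card]
      omega
    -- exponent inequality
    have hexp : -((I2:ℝ) * p^2) + (I2:ℝ)*(8*n)*p^3
        ≤ η + ((Iu:ℝ) + Iv) * Real.log (1-p^2) := by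
      have hc1 : ((Iu:ℝ) + Iv) ≤ (I2:ℝ) + 4*(n:ℝ)^(k-1) := by
        have := hcount1
        push_cast
        exact_mod_cast this
      have hc2 : ((Iu:ℝ) + Iv) ≤ 2*(Mb:ℝ) := by
        have : Iu + Iv ≤ 2 * Mb := by omega
        push_cast
        exact_mod_cast this
      have hc3 : (I2:ℝ) ≤ 2*(Mb:ℝ) := by
        push_cast
        exact_mod_cast hI2le
      have hIuIv0 : (0:ℝ) ≤ (Iu:ℝ) + Iv := by positivity
      have f4 : ((Iu:ℝ)+Iv) * (-(p^2 + 2*p^4)) ≤ ((Iu:ℝ)+Iv) * Real.log (1-p^2) :=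
        mul_le_mul_of_nonneg_left hlog hIuIv0
      have hp2' : (0:ℝ) ≤ p^2 := sq_nonneg p
      have hp4' : (0:ℝ) ≤ p^4 := by positivity
      have hp3' : (0:ℝ) ≤ 8*(n:ℝ)*p^3 := by positivity
      have f1 : ((Iu:ℝ)+Iv) * p^2 ≤ ((I2:ℝ) + 4*(n:ℝ)^(k-1)) * p^2 :=
        mul_le_mul_of_nonneg_right hc1 hp2'
      have f2 : ((Iu:ℝ)+Iv) * p^4 ≤ 2*(Mb:ℝ) * p^4 :=
        mul_le_mul_of_nonneg_right hc2 hp4'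
      have f3 : (I2:ℝ) * (8*(n:ℝ)*p^3) ≤ 2*(Mb:ℝ) * (8*(n:ℝ)*p^3) :=
        mul_le_mul_of_nonneg_right hc3 hp3'
      have e1 : ((Iu:ℝ)+Iv) * (-(p^2 + 2*p^4))
          = -(((Iu:ℝ)+Iv) * p^2) - 2*(((Iu:ℝ)+Iv) * p^4) := by ring
      rw [e1] at f4
      have f1' : ((Iu:ℝ)+Iv) * p^2 ≤ (I2:ℝ)*p^2 + 4*(n:ℝ)^(k-1)*p^2 := by
        calc ((Iu:ℝ)+Iv) * p^2 ≤ ((I2:ℝ) + 4*(n:ℝ)^(k-1)) * p^2 := f1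
          _ = (I2:ℝ)*p^2 + 4*(n:ℝ)^(k-1)*p^2 := by ring
      have f3' : (I2:ℝ)*(8*(n:ℝ))*p^3 ≤ 16*(Mb:ℝ)*(n:ℝ)*p^3 := by
        calc (I2:ℝ)*(8*(n:ℝ))*p^3 = (I2:ℝ) * (8*(n:ℝ)*p^3) := by ring
          _ ≤ 2*(Mb:ℝ) * (8*(n:ℝ)*p^3) := f3
          _ = 16*(Mb:ℝ)*(n:ℝ)*p^3 := by ring
      have f2' : 2*(((Iu:ℝ)+Iv) * p^4) ≤ 4*(Mb:ℝ)*p^4 := by linarith [f2]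
      rw [hη]
      linarith [f4, f1', f2', f3']
    have hmain : Pr M p (fun E => A u E ∧ A v E)
        ≤ Real.exp (η + ((Iu:ℝ)+Iv)*Real.log (1-p^2)) :=
      hup.trans (Real.exp_le_exp.2 hexp)
    have hsplit : Real.exp (η + ((Iu:ℝ)+Iv)*Real.log (1-p^2))
        = Real.exp η * ((1-p^2)^Iu * (1-p^2)^Iv) := by
      rw [Real.exp_add]
      congr 1
      rw [add_mul, Real.exp_add]
      congr 1 <;> rw [← Real.log_pow, Real.exp_log (pow_pos hq _)]
    rw [hsplit] at hmain
    apply hmain.trans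
    apply mul_le_mul_of_nonneg_left _ (Real.exp_nonneg η)
    apply mul_le_mul (hsingle' u) (hsingle' v) (pow_nonneg (by linarith) _)
    exact le_trans (pow_nonneg (by linarith) _) (hsingle' u)
  -- second moment
  have hsm := Pr_second_moment hp0 hp1 M Finset.univ A hcpos
  set Sig2 : ℝ := ∑ u ∈ Finset.univ, ∑ v ∈ Finset.univ,
      Pr M p (fun E => A u E ∧ A v E) with hSig2
  have hSigbound : Sig2 - c^2 ≤ c + (Real.exp η - 1) * c^2 := by
    have hdiag : ∀ u : Fin n, Pr M p (fun E => A u E ∧ A u E) = Pr M p (A u) :=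
      fun u => Pr_congr (fun E _ => ⟨fun h => h.1, fun h => ⟨h, h⟩⟩)
    have hsplitsum : Sig2 = c + ∑ u ∈ Finset.univ, ∑ v ∈ Finset.univ.erase u,
        Pr M p (fun E => A u E ∧ A v E) := by
      rw [hSig2, hc, ← Finset.sum_add_distrib]
      apply Finset.sum_congr rfl
      intro u _
      rw [← hdiag u]
      exact (Finset.add_sum_erase _ _ (Finset.mem_univ u)).symm
    have hT : ∑ u ∈ Finset.univ, ∑ v ∈ Finset.univ.erase u,
        Pr M p (fun E => A u E ∧ A v E)
        ≤ Real.exp η * ∑ u ∈ Finset.univ, ∑ v ∈ Finset.univ.erase u,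
            Pr M p (A u) * Pr M p (A v) := by
      rw [Finset.mul_sum]
      apply Finset.sum_le_sum
      intro u _
      rw [Finset.mul_sum]
      apply Finset.sum_le_sum
      intro v hv
      exact hpair u v (Finset.ne_of_mem_erase hv).symm
    have hT' : ∑ u ∈ Finset.univ, ∑ v ∈ Finset.univ.erase u,
        Pr M p (A u) * Pr M p (A v) ≤ c^2 := by
      have e1 : c^2 = ∑ u ∈ Finset.univ, ∑ v ∈ Finset.univ,
          Pr M p (A u) * Pr M p (A v) := by
        rw [sq, hc, Finset.sum_mul_sum]
      rw [e1]
      apply Finset.sum_le_sum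
      intro u _
      apply Finset.sum_le_sum_of_subset_of_nonneg (Finset.erase_subset u Finset.univ)
      intro v _ _
      exact mul_nonneg (Pr_nonneg hp0 hp1 _) (Pr_nonneg hp0 hp1 _)
    have hTnonneg : (0:ℝ) ≤ ∑ u ∈ Finset.univ, ∑ v ∈ Finset.univ.erase u,
        Pr M p (A u) * Pr M p (A v) := by
      apply Finset.sum_nonneg
      intro u _
      apply Finset.sum_nonneg
      intro v _
      exact mul_nonneg (Pr_nonneg hp0 hp1 _) (Pr_nonneg hp0 hp1 _)
    nlinarith [hT, hT', hsplitsum]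
  -- Chebyshev conclusion
  have hZ : Pr M p (fun E => ∀ u ∈ Finset.univ, ¬ A u E)
      ≤ 1/((n:ℝ)*ℓ) + (Real.exp η - 1) := by
    have hc2 : (0:ℝ) < c^2 := by positivity
    have h1 : Pr M p (fun E => ∀ u ∈ Finset.univ, ¬ A u E) * c^2
        ≤ c + (Real.exp η - 1) * c^2 := by
      calc Pr M p (fun E => ∀ u ∈ Finset.univ, ¬ A u E) * c^2 ≤ Sig2 - c^2 := hsm
        _ ≤ c + (Real.exp η - 1) * c^2 := hSigbound
    have h2 : Pr M p (fun E => ∀ u ∈ Finset.univ, ¬ A u E)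
        ≤ (c + (Real.exp η - 1) * c^2)/c^2 := by
      rw [le_div_iff₀ hc2]
      exact h1
    have h3 : (c + (Real.exp η - 1) * c^2)/c^2 = 1/c + (Real.exp η - 1) := by
      field_simp
    have h4 : 1/c ≤ 1/((n:ℝ)*ℓ) := by
      apply one_div_le_one_div_of_le (by positivity) hcl
    rw [h3] at h2
    linarith
  -- final assembly
  have h1 : Pr M p (fun E => ¬ (∀ u ∈ Finset.univ, ¬ A u E))
      ≤ Pr M p (fun E => ¬ TConnected k n E) := by
    apply Pr_mono hp0 hp1
    intro E hE hne
    push_neg at hne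
    obtain ⟨u, _, hAu⟩ := hne
    exact not_TConnected_of_cherryless n k (by omega) hn (Finset.mem_powerset.1 hE) u hAu
  rw [Pr_not] at h1
  linarith

lemma log_one_sub_sq_ge {p : ℝ} (hp2 : p^2 ≤ 1/2) :
    -(p^2 + 2*p^4) ≤ Real.log (1 - p^2) := by
  have hq : 0 < 1 - p^2 := by nlinarith [sq_nonneg p]
  have h1 : Real.log (1 - p^2)⁻¹ ≤ (1-p^2)⁻¹ - 1 :=
    Real.log_le_sub_one_of_pos (by positivity)
  rw [Real.log_inv] at h1
  have h3 : (1-p^2)⁻¹ - 1 ≤ p^2 + 2*p^4 := by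
    rw [inv_eq_one_div, div_sub' (ne_of_gt hq), div_le_iff₀ hq]
    have haux : (0:ℝ) ≤ p^4*(1-2*p^2) := mul_nonneg (by positivity) (by linarith)
    nlinarith [haux]
  linarith

lemma Mb_le_pow (hk : 1 ≤ k) : n.choose (k-1) * n ≤ n^k := by
  have h1 : n.choose (k-1) ≤ n^(k-1) := choose_le_pow' n (k-1)
  calc n.choose (k-1) * n ≤ n^(k-1) * n := Nat.mul_le_mul_right _ h1
    _ = n^k := by rw [← pow_succ]; congr 1; omega

lemma Mb_fact_le_pow (hk : 1 ≤ k) : (n.choose (k-1) * n) * (k-1).factorial ≤ n^k := by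
  have h1 : n.choose (k-1) * (k-1).factorial ≤ n^(k-1) := by
    rw [mul_comm, ← Nat.descFactorial_eq_factorial_mul_choose]
    exact Nat.descFactorial_le_pow n (k-1)
  calc n.choose (k-1) * n * (k-1).factorial
      = (n.choose (k-1) * (k-1).factorial) * n := by ring
    _ ≤ n^(k-1) * n := Nat.mul_le_mul_right _ h1
    _ = n^k := by rw [← pow_succ]; congr 1; omega

end OffsetAux


open OffsetAux in
lemma prH_eq_Pr (n k : ℕ) (p : ℝ) (P : Finset (Finset (Fin n)) → Prop) :
    prH n k p P = Pr (kSets n k) p P := by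
  rw [prH, Pr, Ex]
  apply Finset.sum_congr rfl
  intro E _
  by_cases h : P E <;> simp [h]


set_option maxHeartbeats 1600000 in
open OffsetAux in
/-- Let `k ≥ 3` and `ε > 0` be fixed. If `0 ≤ p ≤ (1-ε)·√((k-1)!·log n / n^k)`, then
a.a.s. `H_{n,p}^{(k)}` is not 𝒯-connected. -/
theorem TConnected_below_threshold (k : ℕ) (hk : 3 ≤ k) (ε : ℝ) (hε : 0 < ε)
    (p : ℕ → ℝ) (hp0 : ∀ n : ℕ, 0 ≤ p n)
    (hp : ∀ n : ℕ,
      p n ≤ (1 - ε) * Real.sqrt (((k - 1).factorial : ℝ) * Real.log n / (n : ℝ) ^ k)) :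
    Tendsto (fun n : ℕ => prH n k (p n) fun E => ¬ TConnected k n E)
      atTop (nhds 1) := by
  classical
  set ε' : ℝ := min ε (1/2) with hε'def
  have hε'pos : 0 < ε' := lt_min hε (by norm_num)
  have hε'le : ε' ≤ (1:ℝ)/2 := min_le_right _ _
  set C : ℝ := ((k-1).factorial : ℝ) with hC
  have hCpos : 0 < C := by
    rw [hC]; exact_mod_cast Nat.factorial_pos _
  set x : ℕ → ℝ := fun n => C * Real.log n / (n:ℝ)^k with hx
  have h1e' : (0:ℝ) ≤ 1 - ε' := by linarith
  have hp' : ∀ n : ℕ, p n ≤ (1 - ε') * Real.sqrt (x n) := by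
    intro n
    refine (hp n).trans ?_
    apply mul_le_mul_of_nonneg_right _ (Real.sqrt_nonneg _)
    have : ε' ≤ ε := min_le_left _ _
    linarith
  have hx0 : ∀ n : ℕ, 1 ≤ n → 0 ≤ x n := by
    intro n hn
    have hlog : 0 ≤ Real.log n := Real.log_nonneg (by exact_mod_cast hn)
    rw [hx]
    positivity
  have hpsq : ∀ n : ℕ, 1 ≤ n → p n ^ 2 ≤ (1-ε')^2 * x n := by
    intro n hn
    have h := hp' n
    have hpn := hp0 n
    calc p n ^2 ≤ ((1-ε') * Real.sqrt (x n))^2 := by nlinarith [h, hpn]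
      _ = (1-ε')^2 * (Real.sqrt (x n))^2 := by ring
      _ = (1-ε')^2 * x n := by rw [Real.sq_sqrt (hx0 n hn)]
  have hpsq1 : ∀ n : ℕ, 1 ≤ n → p n ^2 ≤ x n := by
    intro n hn
    have h := hpsq n hn
    have h2 := hx0 n hn
    have h3 : (1-ε')^2 ≤ 1 := by nlinarith [hε'pos, h1e']
    calc p n ^2 ≤ (1-ε')^2 * x n := h
      _ ≤ 1 * x n := mul_le_mul_of_nonneg_right h3 h2
      _ = x n := one_mul _
  -- basic limits
  have haux : ∀ m : ℕ, Tendsto (fun n : ℕ => Real.log n ^ m / n) atTop (nhds 0) := by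
    intro m
    have h := Real.tendsto_pow_log_div_mul_add_atTop 1 0 m one_ne_zero
    have h' : Tendsto (fun y : ℝ => Real.log y ^ m / y) atTop (nhds 0) := by
      apply h.congr
      intro y
      norm_num
    exact h'.comp tendsto_natCast_atTop_atTop
  have haux1 : Tendsto (fun n : ℕ => Real.log n / n) atTop (nhds 0) := by
    have := haux 1
    simpa using this
  -- x → 0
  have hxto0 : Tendsto x atTop (nhds 0) := by
    have hupper : ∀ᶠ n : ℕ in atTop, x n ≤ C * (Real.log n / n) := by
      filter_upwards [eventually_ge_atTop 1] with n hn
      have hnpos : (0:ℝ) < n := by exact_mod_cast hn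
      have hlog : 0 ≤ Real.log n := Real.log_nonneg (by exact_mod_cast hn)
      have hxn : x n = C * Real.log n / (n:ℝ)^k := rfl
      rw [hxn, mul_div_assoc]
      apply mul_le_mul_of_nonneg_left _ (le_of_lt hCpos)
      apply div_le_div_of_nonneg_left hlog hnpos
      calc (n:ℝ) = (n:ℝ)^1 := (pow_one _).symm
        _ ≤ (n:ℝ)^k := pow_le_pow_right₀ (by exact_mod_cast hn) (by omega)
    have hlower : ∀ᶠ n : ℕ in atTop, 0 ≤ x n := by
      filter_upwards [eventually_ge_atTop 1] with n hn
      exact hx0 n hn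
    have hCb : Tendsto (fun n : ℕ => C * (Real.log n / n)) atTop (nhds 0) := by
      have := haux1.const_mul C
      simpa using this
    exact tendsto_of_tendsto_of_tendsto_of_le_of_le' tendsto_const_nhds hCb hlower hupper
  -- error functions
  set B : ℕ → ℝ := fun n => 16*C*Real.sqrt (C * (Real.log n^3 / n))
      + 4*C*(Real.log n/n) + 4*C^2*(Real.log n^2/n) with hB
  have hBto0 : Tendsto B atTop (nhds 0) := by
    have t1 : Tendsto (fun n : ℕ => 16*C*Real.sqrt (C * (Real.log n^3 / n)))
        atTop (nhds 0) := by
      have h1 : Tendsto (fun n : ℕ => C * (Real.log n^3 / n)) atTop (nhds 0) := by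
        have := (haux 3).const_mul C
        simpa using this
      have h2 := h1.sqrt
      rw [Real.sqrt_zero] at h2
      have := h2.const_mul (16*C)
      simpa using this
    have t2 : Tendsto (fun n : ℕ => 4*C*(Real.log n/n)) atTop (nhds 0) := by
      have := haux1.const_mul (4*C)
      simpa using this
    have t3 : Tendsto (fun n : ℕ => 4*C^2*(Real.log n^2/n)) atTop (nhds 0) := by
      have := (haux 2).const_mul (4*C^2)
      simpa using this
    have := (t1.add t2).add t3
    simpa using this
  set G : ℕ → ℝ := fun n => Real.exp (-(ε'/2 * Real.log n)) with hG
  have hGto0 : Tendsto G atTop (nhds 0) := by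
    have h1 : Tendsto (fun n : ℕ => ε'/2 * Real.log n) atTop atTop := by
      apply Tendsto.const_mul_atTop (by positivity)
      exact Real.tendsto_log_atTop.comp tendsto_natCast_atTop_atTop
    have h2 : Tendsto (fun y : ℝ => Real.exp (-y)) atTop (nhds 0) :=
      Real.tendsto_exp_neg_atTop_nhds_zero
    exact h2.comp h1
  -- eventual bounds
  have hlow : ∀ᶠ n : ℕ in atTop,
      1 - (G n + (Real.exp (B n) - 1))
        ≤ prH n k (p n) (fun E => ¬ TConnected k n E) := by
    have hxev : ∀ᶠ n : ℕ in atTop, x n < ε'/4 :=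
      hxto0.eventually (gt_mem_nhds (by positivity))
    filter_upwards [eventually_ge_atTop 2, hxev] with n hn2 hxe
    have hn1 : (1:ℕ) ≤ n := by omega
    have hnR : (1:ℝ) ≤ n := by exact_mod_cast hn1
    have hnpos : (0:ℝ) < n := by linarith
    have hlog0 : 0 ≤ Real.log n := Real.log_nonneg hnR
    have hpn0 := hp0 n
    have hpx := hpsq1 n hn1
    have hp2 : p n ^ 2 ≤ 1/2 := by
      have : ε'/4 ≤ 1/2 := by linarith
      linarith [hpx, hxe]
    have hq : 0 < 1 - p n ^2 := by nlinarith [sq_nonneg (p n)]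
    have hmaster := master n k hk hn2 hpn0 hp2
    rw [prH_eq_Pr]
    have hkS : kSets n k = kSets' n k := rfl
    rw [hkS]
    refine le_trans ?_ hmaster
    -- compare error terms
    set Mb : ℕ := n.choose (k-1) * n with hMb
    set L : ℝ := Real.log n with hL
    have hMbpow : (Mb:ℝ) ≤ (n:ℝ)^k := by
      have := Mb_le_pow n k (by omega)
      exact_mod_cast this
    have hMb0 : (0:ℝ) ≤ (Mb:ℝ) := Nat.cast_nonneg _
    have hxval : x n = C * L / (n:ℝ)^k := rfl
    have hnk_pos : (0:ℝ) < (n:ℝ)^k := by positivity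
    -- η ≤ B n
    have hη_le : 16 * (Mb:ℝ) * n * p n^3 + 4*(n:ℝ)^(k-1)*p n^2 + 4*(Mb:ℝ)*p n^4
        ≤ B n := by
      have hCL0 : 0 ≤ C * L := by positivity
      -- term 1
      have ht1 : 16 * (Mb:ℝ) * n * p n^3 ≤ 16*C*Real.sqrt (C * (L^3 / n)) := by
        have hstep1 : (Mb:ℝ) * n * p n^3 ≤ (n:ℝ)^(k+1) * p n^3 := by
          have h1 : (Mb:ℝ) * n ≤ (n:ℝ)^(k+1) := by
            calc (Mb:ℝ) * n ≤ (n:ℝ)^k * n :=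
                mul_le_mul_of_nonneg_right hMbpow (by linarith)
              _ = (n:ℝ)^(k+1) := (pow_succ _ _).symm
          exact mul_le_mul_of_nonneg_right h1 (by positivity)
        have hsq : ((n:ℝ)^(k+1) * p n^3)^2 ≤ C^3 * L^3 / n := by
          have hp6 : (p n^2)^3 ≤ (C*L/(n:ℝ)^k)^3 :=
            pow_le_pow_left₀ (sq_nonneg _) (by rw [← hxval]; exact hpx) 3
          have he1 : ((n:ℝ)^(k+1) * p n^3)^2 = (n:ℝ)^(2*k+2) * (p n^2)^3 := by
            rw [← pow_mul]
            ring
          rw [he1]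
          calc (n:ℝ)^(2*k+2) * (p n^2)^3
              ≤ (n:ℝ)^(2*k+2) * ((C*L)^3/((n:ℝ)^k)^3) := by
                apply mul_le_mul_of_nonneg_left _ (by positivity)
                rw [← div_pow]
                exact hp6
            _ = (n:ℝ)^(2*k+2) * ((C*L)^3/(n:ℝ)^(k*3)) := by rw [← pow_mul]
            _ ≤ (C*L)^3 / n := by
                rw [mul_div_assoc']
                rw [div_le_div_iff₀ (by positivity) hnpos]
                have : (n:ℝ)^(2*k+2) * n = (n:ℝ)^(2*k+3) := by
                  rw [← pow_succ]
                have h2 : (n:ℝ)^(2*k+3) ≤ (n:ℝ)^(k*3) :=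
                  pow_le_pow_right₀ hnR (by omega)
                calc (n:ℝ)^(2*k+2) * (C*L)^3 * n
                    = (C*L)^3 * ((n:ℝ)^(2*k+2) * n) := by ring
                  _ = (C*L)^3 * (n:ℝ)^(2*k+3) := by rw [this]
                  _ ≤ (C*L)^3 * (n:ℝ)^(k*3) :=
                      mul_le_mul_of_nonneg_left h2 (by positivity)
            _ = C^3 * L^3 / n := by rw [mul_pow]
        have hsqrt : (n:ℝ)^(k+1) * p n^3 ≤ Real.sqrt (C^3 * L^3/n) :=
          Real.le_sqrt_of_sq_le hsq
        have hsqrteq : Real.sqrt (C^3 * L^3/n) = C * Real.sqrt (C * (L^3/n)) := by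
          have : C^3 * L^3/n = C^2 * (C * (L^3/n)) := by ring
          rw [this, Real.sqrt_mul (by positivity), Real.sqrt_sq (le_of_lt hCpos)]
        calc 16 * (Mb:ℝ) * n * p n^3 = 16 * ((Mb:ℝ) * n * p n^3) := by ring
          _ ≤ 16 * ((n:ℝ)^(k+1) * p n^3) := by linarith [hstep1]
          _ ≤ 16 * (C * Real.sqrt (C * (L^3/n))) := by
              rw [← hsqrteq]; linarith [hsqrt]
          _ = 16*C*Real.sqrt (C * (L^3 / n)) := by ring
      -- term 2
      have ht2 : 4*(n:ℝ)^(k-1) * p n^2 ≤ 4*C*(L/n) := by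
        have h1 : (n:ℝ)^(k-1) * p n^2 ≤ (n:ℝ)^(k-1) * (C*L/(n:ℝ)^k) := by
          apply mul_le_mul_of_nonneg_left _ (by positivity)
          rw [← hxval]; exact hpx
        have h2 : (n:ℝ)^(k-1) * (C*L/(n:ℝ)^k) = C*L/n := by
          rw [mul_div_assoc']
          rw [div_eq_div_iff (ne_of_gt hnk_pos) (ne_of_gt hnpos)]
          have : (n:ℝ)^(k-1) * n = (n:ℝ)^k := by
            rw [← pow_succ]; congr 1; omega
          calc (n:ℝ)^(k-1) * (C*L) * n = C*L*((n:ℝ)^(k-1)*n) := by ring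
            _ = C*L*(n:ℝ)^k := by rw [this]
        calc 4*(n:ℝ)^(k-1) * p n^2 = 4*((n:ℝ)^(k-1) * p n^2) := by ring
          _ ≤ 4*(C*L/n) := by rw [← h2]; linarith [h1]
          _ = 4*C*(L/n) := by ring
      -- term 3
      have ht3 : 4*(Mb:ℝ) * p n^4 ≤ 4*C^2*(L^2/n) := by
        have hp4 : p n^4 ≤ (C*L)^2/((n:ℝ)^k)^2 := by
          have : (p n^2)^2 ≤ (C*L/(n:ℝ)^k)^2 :=
            pow_le_pow_left₀ (sq_nonneg _) (by rw [← hxval]; exact hpx) 2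
          calc p n^4 = (p n^2)^2 := by ring
            _ ≤ (C*L/(n:ℝ)^k)^2 := this
            _ = (C*L)^2/((n:ℝ)^k)^2 := by rw [div_pow]
        have h1 : (Mb:ℝ) * p n^4 ≤ (n:ℝ)^k * ((C*L)^2/((n:ℝ)^k)^2) := by
          apply mul_le_mul hMbpow hp4 (by positivity) (by positivity)
        have h2 : (n:ℝ)^k * ((C*L)^2/((n:ℝ)^k)^2) ≤ (C*L)^2/n := by
          rw [mul_div_assoc', ← pow_mul]
          rw [div_le_div_iff₀ (by positivity) hnpos]
          have he : (n:ℝ)^k * n = (n:ℝ)^(k+1) := (pow_succ _ _).symm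
          have h3 : (n:ℝ)^(k+1) ≤ (n:ℝ)^(k*2) := pow_le_pow_right₀ hnR (by omega)
          calc (n:ℝ)^k * (C*L)^2 * n = (C*L)^2 * ((n:ℝ)^k * n) := by ring
            _ = (C*L)^2 * (n:ℝ)^(k+1) := by rw [he]
            _ ≤ (C*L)^2 * (n:ℝ)^(k*2) := mul_le_mul_of_nonneg_left h3 (by positivity)
        calc 4*(Mb:ℝ) * p n^4 = 4*((Mb:ℝ) * p n^4) := by ring
          _ ≤ 4*((C*L)^2/n) := by linarith [h1.trans h2]
          _ = 4*C^2*(L^2/n) := by rw [mul_pow]; ring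
      rw [hB]
      simp only
      rw [← hL]
      linarith [ht1, ht2, ht3]
    -- 1/(n·ℓ) ≤ G n
    have hℓ_le : 1/((n:ℝ) * (1 - p n^2)^Mb) ≤ G n := by
      have hMbp2 : (Mb:ℝ) * p n^2 ≤ (1-ε')^2 * L := by
        have hMbC : (Mb:ℝ) * C ≤ (n:ℝ)^k := by
          rw [hC, hMb]
          have h := Mb_fact_le_pow n k (by omega)
          exact_mod_cast h
        have h1 : (Mb:ℝ) ≤ (n:ℝ)^k / C := by
          rw [le_div_iff₀ hCpos]; exact hMbC
        have h2 : (n:ℝ)^k * p n^2 ≤ (1-ε')^2 * (C * L) := by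
          have := hpsq n hn1
          calc (n:ℝ)^k * p n^2 ≤ (n:ℝ)^k * ((1-ε')^2 * x n) :=
              mul_le_mul_of_nonneg_left this (by positivity)
            _ = (1-ε')^2 * (C * L) := by
                rw [hxval]
                field_simp
        calc (Mb:ℝ) * p n^2 ≤ ((n:ℝ)^k / C) * p n^2 :=
            mul_le_mul_of_nonneg_right h1 (sq_nonneg _)
          _ = ((n:ℝ)^k * p n^2)/C := by ring
          _ ≤ ((1-ε')^2 * (C * L))/C := by gcongr
          _ = (1-ε')^2 * L := by field_simp
      have hMbtot : (Mb:ℝ) * (p n^2 + 2*p n^4) ≤ (1 - ε'/2) * L := by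
        have hpe : p n^2 ≤ ε'/4 := le_of_lt (lt_of_le_of_lt hpx hxe)
        have h2 : (Mb:ℝ) * p n^4 ≤ (1-ε')^2 * L * (ε'/4) := by
          calc (Mb:ℝ) * p n^4 = ((Mb:ℝ) * p n^2) * p n^2 := by ring
            _ ≤ ((1-ε')^2 * L) * (ε'/4) := by
                apply mul_le_mul hMbp2 hpe (sq_nonneg _)
                positivity
        have hL0 : 0 ≤ L := hlog0
        have hscal : (1-ε')^2 * (1+ε'/2) ≤ 1 - ε'/2 := by
          nlinarith [hε'pos, hε'le, sq_nonneg ε', sq_nonneg (1-ε')]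
        have hfin : (1-ε')^2 * L + 2*((1-ε')^2 * L * (ε'/4)) ≤ (1 - ε'/2) * L := by
          have e : (1-ε')^2 * L + 2*((1-ε')^2 * L * (ε'/4))
              = ((1-ε')^2 * (1+ε'/2)) * L := by ring
          rw [e]
          exact mul_le_mul_of_nonneg_right hscal hL0
        calc (Mb:ℝ) * (p n^2 + 2*p n^4) = (Mb:ℝ)*p n^2 + 2*((Mb:ℝ)*p n^4) := by ring
          _ ≤ (1-ε')^2 * L + 2*((1-ε')^2 * L * (ε'/4)) := by linarith [hMbp2, h2]
          _ ≤ (1 - ε'/2) * L := hfin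
      have hℓ_lower : Real.exp (-((1-ε'/2) * L)) ≤ (1 - p n^2)^Mb := by
        have hlogb := log_one_sub_sq_ge hp2
        have h1 : (1 - p n^2)^Mb = Real.exp ((Mb:ℝ) * Real.log (1 - p n^2)) := by
          rw [← Real.log_pow, Real.exp_log (pow_pos hq _)]
        rw [h1]
        apply Real.exp_le_exp.2
        calc -((1-ε'/2) * L) ≤ -((Mb:ℝ) * (p n^2 + 2*p n^4)) := by linarith [hMbtot]
          _ = (Mb:ℝ) * (-(p n^2 + 2*p n^4)) := by ring
          _ ≤ (Mb:ℝ) * Real.log (1 - p n^2) :=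
              mul_le_mul_of_nonneg_left hlogb hMb0
      have hprod : Real.exp (ε'/2 * L) ≤ (n:ℝ) * (1 - p n^2)^Mb := by
        have hn_eq : (n:ℝ) = Real.exp L := by
          rw [hL, Real.exp_log hnpos]
        have e1 : ε'/2 * L = L + (-((1-ε'/2) * L)) := by ring
        rw [e1, Real.exp_add, hn_eq]
        exact mul_le_mul_of_nonneg_left hℓ_lower (Real.exp_nonneg _)
      rw [hG]
      simp only
      rw [← hL, Real.exp_neg]
      rw [one_div]
      apply inv_anti₀ (Real.exp_pos _) hprod
    -- combine
    have hmon : Real.exp (16 * (Mb:ℝ) * n * p n^3 + 4*(n:ℝ)^(k-1)*p n^2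
            + 4*(Mb:ℝ)*p n^4) - 1 ≤ Real.exp (B n) - 1 := by
      have := Real.exp_le_exp.2 hη_le
      linarith
    have := add_le_add hℓ_le hmon
    linarith [this]
  have hupp : ∀ᶠ n : ℕ in atTop,
      prH n k (p n) (fun E => ¬ TConnected k n E) ≤ 1 := by
    have hxev : ∀ᶠ n : ℕ in atTop, x n < 1 :=
      hxto0.eventually (gt_mem_nhds (by norm_num))
    filter_upwards [eventually_ge_atTop 1, hxev] with n hn1 hxe
    have hpx := hpsq1 n hn1
    have hp1 : p n ≤ 1 := by nlinarith [hp0 n, hpx, hxe]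
    rw [prH_eq_Pr]
    exact Pr_le_one (hp0 n) hp1 _
  have hlim : Tendsto (fun n : ℕ => 1 - (G n + (Real.exp (B n) - 1)))
      atTop (nhds 1) := by
    have hexpB : Tendsto (fun n : ℕ => Real.exp (B n)) atTop (nhds 1) := by
      have := (Real.continuous_exp.tendsto 0).comp hBto0
      simpa [Function.comp_def] using this
    have h1 : Tendsto (fun n : ℕ => G n + (Real.exp (B n) - 1)) atTop (nhds 0) := by
      have hone' : Tendsto (fun _ : ℕ => (1:ℝ)) atTop (nhds 1) := tendsto_const_nhds
      have := hGto0.add (hexpB.sub hone')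
      simpa using this
    have hone : Tendsto (fun _ : ℕ => (1:ℝ)) atTop (nhds 1) := tendsto_const_nhds
    have := hone.sub h1
    simpa using this
  exact tendsto_of_tendsto_of_tendsto_of_le_of_le' hlim tendsto_const_nhds hlow hupp
end

section
/- Let k ≥ 3 be an integer, ε > 0 fixed, and p = (1+ε)·√((k−1)! · log n / n^k). Then, uniformly over all sets S ⊆ [n] with 1 ≤ |S| = s ≤ n/2, the probability that H_{n,p}^{(k)} contains no 1-offset trail of exactly 2 edges with one endpoint in S and the other endpoint in [n] \ S is at most exp(−(1+o(1))·(1+ε)²·s·((n−s)/n)·log n). -/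
open Finset Filter
open scoped Classical

/-- A `1`-offset trail of exactly `2` edges in `E` with one endpoint in `S` and the
other endpoint outside `S`. -/
def HasCrossingTrail (n k : ℕ) (S : Finset (Fin n)) (E : Finset (Finset (Fin n))) :
    Prop :=
  ∃ E1 ∈ E, ∃ E2 ∈ E, E1 ≠ E2 ∧ (E1 ∩ E2).card = k - 1 ∧
    ∃ u v : Fin n, E1 \ E2 = {u} ∧ E2 \ E1 = {v} ∧
      ((u ∈ S ∧ v ∉ S) ∨ (u ∉ S ∧ v ∈ S))


namespace CrossTrailProof

variable {ι : Type*} [DecidableEq ι]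

noncomputable def Ex (p q : ℝ) (A : Finset ι) (f : Finset ι → ℝ) : ℝ :=
  ∑ E ∈ A.powerset, p ^ E.card * q ^ (A.card - E.card) * f E

lemma Ex_empty (p q : ℝ) (f : Finset ι → ℝ) : Ex p q (∅ : Finset ι) f = f ∅ := by
  simp [Ex]

lemma Ex_congr (p q : ℝ) {A : Finset ι} {f g : Finset ι → ℝ}
    (h : ∀ E ∈ A.powerset, f E = g E) : Ex p q A f = Ex p q A g :=
  Finset.sum_congr rfl fun E hE => by rw [h E hE]

lemma Ex_insert (p q : ℝ) {a : ι} {A : Finset ι} (ha : a ∉ A) (f : Finset ι → ℝ) :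
    Ex p q (insert a A) f
      = p * Ex p q A (fun E => f (insert a E)) + q * Ex p q A f := by
  have h1 : ∑ t ∈ A.powerset,
      p ^ t.card * q ^ ((insert a A).card - t.card) * f t
      = q * ∑ t ∈ A.powerset, p ^ t.card * q ^ (A.card - t.card) * f t := by
    rw [Finset.mul_sum]
    refine Finset.sum_congr rfl fun t ht => ?_
    have htA : t ⊆ A := Finset.mem_powerset.1 ht
    have h2 : t.card ≤ A.card := Finset.card_le_card htA
    rw [Finset.card_insert_of_notMem ha,
      show A.card + 1 - t.card = (A.card - t.card) + 1 by omega, pow_succ]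
    ring
  have h2 : ∑ t ∈ A.powerset,
      p ^ (insert a t).card * q ^ ((insert a A).card - (insert a t).card) * f (insert a t)
      = p * ∑ t ∈ A.powerset, p ^ t.card * q ^ (A.card - t.card) * f (insert a t) := by
    rw [Finset.mul_sum]
    refine Finset.sum_congr rfl fun t ht => ?_
    have htA : t ⊆ A := Finset.mem_powerset.1 ht
    have hat : a ∉ t := fun h => ha (htA h)
    have h2 : t.card ≤ A.card := Finset.card_le_card htA
    rw [Finset.card_insert_of_notMem ha, Finset.card_insert_of_notMem hat,
      show A.card + 1 - (t.card + 1) = A.card - t.card by omega, pow_succ]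
    ring
  unfold Ex
  rw [Finset.sum_powerset_insert ha, h1, h2]
  ring

lemma Ex_one (p q : ℝ) (A : Finset ι) : Ex p q A (fun _ => 1) = (p + q) ^ A.card := by
  induction A using Finset.induction_on with
  | empty => simp [Ex]
  | @insert a A ha ih =>
    rw [Ex_insert p q ha]
    show p * Ex p q A (fun _ => 1) + q * Ex p q A (fun _ => 1) = _
    rw [ih, Finset.card_insert_of_notMem ha, pow_succ]
    ring

lemma Ex_mono (p q : ℝ) (hp : 0 ≤ p) (hq : 0 ≤ q) {A : Finset ι} {f g : Finset ι → ℝ}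
    (h : ∀ E ∈ A.powerset, f E ≤ g E) : Ex p q A f ≤ Ex p q A g := by
  refine Finset.sum_le_sum fun E hE => ?_
  have hw : 0 ≤ p ^ E.card * q ^ (A.card - E.card) :=
    mul_nonneg (pow_nonneg hp _) (pow_nonneg hq _)
  rw [mul_assoc, mul_assoc]
  exact mul_le_mul_of_nonneg_left (mul_le_mul_of_nonneg_left (h E hE) (pow_nonneg hq _))
    (pow_nonneg hp _)

lemma Ex_nonneg (p q : ℝ) (hp : 0 ≤ p) (hq : 0 ≤ q) {A : Finset ι} {f : Finset ι → ℝ}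
    (h : ∀ E ∈ A.powerset, 0 ≤ f E) : 0 ≤ Ex p q A f := by
  have := Ex_mono p q hp hq (A := A) (f := fun _ => 0) (g := f) (fun E hE => h E hE)
  simpa [Ex] using this

lemma Ex_lincomb (p q : ℝ) (A : Finset ι) (c d : ℝ) (u v : Finset ι → ℝ) :
    Ex p q A (fun E => c * u E + d * v E) = c * Ex p q A u + d * Ex p q A v := by
  unfold Ex
  rw [Finset.mul_sum, Finset.mul_sum, ← Finset.sum_add_distrib]
  exact Finset.sum_congr rfl fun E _ => by ring

lemma Ex_sub (p q : ℝ) (A : Finset ι) (u v : Finset ι → ℝ) :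
    Ex p q A (fun E => u E - v E) = Ex p q A u - Ex p q A v := by
  unfold Ex
  rw [← Finset.sum_sub_distrib]
  exact Finset.sum_congr rfl fun E _ => by ring

lemma Ex_const_mul (p q : ℝ) (A : Finset ι) (c : ℝ) (u : Finset ι → ℝ) :
    Ex p q A (fun E => c * u E) = c * Ex p q A u := by
  have := Ex_lincomb p q A c 0 u u
  simpa using this

lemma Ex_const (p q : ℝ) (A : Finset ι) (c : ℝ) :
    Ex p q A (fun _ => c) = c * (p + q) ^ A.card := by
  have h : Ex p q A (fun _ => c) = Ex p q A (fun E => c * (fun _ => (1:ℝ)) E) :=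
    Ex_congr p q fun E _ => by simp
  rw [h, Ex_const_mul, Ex_one]

lemma Ex_sum (p q : ℝ) (A : Finset ι) {τ : Type*} (J : Finset τ) (h : τ → Finset ι → ℝ) :
    Ex p q A (fun E => ∑ j ∈ J, h j E) = ∑ j ∈ J, Ex p q A (h j) := by
  unfold Ex
  rw [Finset.sum_comm]
  exact Finset.sum_congr rfl fun E _ => by rw [Finset.mul_sum]

lemma Ex_union (p q : ℝ) (A : Finset ι) : ∀ (B : Finset ι), Disjoint A B →
    ∀ (f : Finset ι → ℝ),
    Ex p q (A ∪ B) f = Ex p q A (fun E => Ex p q B fun F => f (E ∪ F)) := by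
  intro B
  induction B using Finset.induction_on with
  | empty =>
    intro _ f
    simp only [Finset.union_empty]
    exact Ex_congr p q fun E _ => by rw [Ex_empty]; rw [Finset.union_empty]
  | @insert b B hb ihB =>
    intro hAB f
    have hbA : b ∉ A := (Finset.disjoint_insert_right.1 hAB).1
    have hAB' : Disjoint A B := (Finset.disjoint_insert_right.1 hAB).2
    have hbAB : b ∉ A ∪ B := by simp [hbA, hb]
    rw [Finset.union_insert, Ex_insert p q hbAB f, ihB hAB' f,
      ihB hAB' (fun E => f (insert b E)),
      show (fun E => Ex p q (insert b B) fun F => f (E ∪ F))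
        = (fun E => p * Ex p q B (fun F => f (E ∪ insert b F))
            + q * Ex p q B (fun F => f (E ∪ F)))
        from funext fun E => Ex_insert p q hb _,
      Ex_lincomb]
    have : (fun E => Ex p q B fun F => f (insert b (E ∪ F)))
        = (fun E => Ex p q B fun F => f (E ∪ insert b F)) :=
      funext fun E => congrArg (Ex p q B) (funext fun F => by rw [Finset.union_insert])
    rw [← this]

noncomputable def chi (D E : Finset ι) : ℝ := if D ⊆ E then 1 else 0

lemma chi_nonneg (D E : Finset ι) : 0 ≤ chi D E := by
  unfold chi; split <;> norm_num

lemma chi_le_one (D E : Finset ι) : chi D E ≤ 1 := by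
  unfold chi; split <;> norm_num

lemma chi_mono (D : Finset ι) {E F : Finset ι} (h : E ⊆ F) : chi D E ≤ chi D F := by
  unfold chi
  by_cases h1 : D ⊆ E
  · rw [if_pos h1, if_pos (h1.trans h)]
  · rw [if_neg h1]; split <;> norm_num

lemma chi_union (D1 D2 E : Finset ι) : chi (D1 ∪ D2) E = chi D1 E * chi D2 E := by
  unfold chi
  by_cases h1 : D1 ⊆ E <;> by_cases h2 : D2 ⊆ E <;>
    simp [Finset.union_subset_iff, h1, h2]


lemma Ex_chi_mul (p q : ℝ) (hpq : p + q = 1) {A D : Finset ι} (hD : D ⊆ A)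
    (g : Finset ι → ℝ) (hg : ∀ E, g (E \ D) = g E) :
    Ex p q A (fun E => chi D E * g E) = p ^ D.card * Ex p q A g := by
  have hd : Disjoint (A \ D) D := sdiff_disjoint
  have hA : A = (A \ D) ∪ D := (Finset.sdiff_union_of_subset hD).symm
  rw [hA, Ex_union p q _ _ hd, Ex_union p q _ _ hd]
  have h₁ : ∀ E ∈ (A \ D).powerset,
      Ex p q D (fun F => chi D (E ∪ F) * g (E ∪ F)) = p ^ D.card * g E := by
    intro E hE
    have hED : Disjoint E D := by
      rw [Finset.disjoint_left]
      intro x hxE hxD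
      exact (Finset.mem_sdiff.1 (Finset.mem_powerset.1 hE hxE)).2 hxD
    unfold Ex
    rw [Finset.sum_eq_single_of_mem D (Finset.mem_powerset_self D)]
    · show p ^ D.card * q ^ (D.card - D.card) * (chi D (E ∪ D) * g (E ∪ D)) = p ^ D.card * g E
      have hchi : chi D (E ∪ D) = 1 := by
        unfold chi; rw [if_pos Finset.subset_union_right]
      have h6 : (E ∪ D) \ D = E := Finset.union_sdiff_cancel_right hED
      have hgg : g (E ∪ D) = g E := by
        have h5 := hg (E ∪ D)
        rw [h6] at h5
        exact h5.symm
      rw [hchi, hgg, Nat.sub_self, pow_zero]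
      ring
    · intro F hF hFne
      show p ^ F.card * q ^ (D.card - F.card) * (chi D (E ∪ F) * g (E ∪ F)) = 0
      have hchi : chi D (E ∪ F) = 0 := by
        unfold chi
        rw [if_neg]
        intro hDsub
        have hDF : D ⊆ F := by
          intro d hd
          rcases Finset.mem_union.1 (hDsub hd) with h | h
          · exact absurd hd (Finset.disjoint_left.1 hED h)
          · exact h
        exact hFne (Finset.Subset.antisymm (Finset.mem_powerset.1 hF) hDF)
      rw [hchi]
      ring
  rw [Ex_congr p q h₁]
  have h₂ : ∀ E ∈ (A \ D).powerset,
      Ex p q D (fun F => g (E ∪ F)) = g E := by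
    intro E hE
    have hED : Disjoint E D := by
      rw [Finset.disjoint_left]
      intro x hxE hxD
      exact (Finset.mem_sdiff.1 (Finset.mem_powerset.1 hE hxE)).2 hxD
    have hgE : ∀ F ∈ D.powerset, g (E ∪ F) = g E := by
      intro F hF
      have h5 := hg (E ∪ F)
      have h6 : (E ∪ F) \ D = E := by
        rw [Finset.union_sdiff_distrib,
          Finset.sdiff_eq_empty_iff_subset.2 (Finset.mem_powerset.1 hF),
          Finset.union_empty, Finset.sdiff_eq_self_of_disjoint hED]
      rw [h6] at h5
      exact h5.symm
    rw [Ex_congr p q hgE, Ex_const, hpq, one_pow, mul_one]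
  rw [Ex_congr p q h₂, Ex_const_mul]

lemma Ex_chi (p q : ℝ) (hpq : p + q = 1) {A D : Finset ι} (hD : D ⊆ A) :
    Ex p q A (chi D) = p ^ D.card := by
  have h : Ex p q A (chi D) = Ex p q A (fun E => chi D E * (fun _ => (1:ℝ)) E) :=
    Ex_congr p q fun E _ => by simp
  rw [h, Ex_chi_mul p q hpq hD (fun _ => 1) (fun _ => rfl), Ex_one, hpq, one_pow, mul_one]

lemma harris (p q : ℝ) (hp : 0 ≤ p) (hq : 0 ≤ q) (hpq : p + q = 1) (A : Finset ι) :
    ∀ (f g : Finset ι → ℝ), (∀ E F : Finset ι, E ⊆ F → f E ≤ f F) →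
      (∀ E F : Finset ι, E ⊆ F → g E ≤ g F) →
      Ex p q A f * Ex p q A g ≤ Ex p q A (fun E => f E * g E) := by
  induction A using Finset.induction_on with
  | empty =>
    intro f g _ _
    rw [Ex_empty, Ex_empty, Ex_empty]
  | @insert a A ha ih =>
    intro f g hf hg
    rw [Ex_insert p q ha f, Ex_insert p q ha g, Ex_insert p q ha (fun E => f E * g E)]
    show _ ≤ p * Ex p q A (fun E => f (insert a E) * g (insert a E))
        + q * Ex p q A (fun E => f E * g E)
    set F1 := Ex p q A (fun E => f (insert a E)) with hF1d
    set F0 := Ex p q A f with hF0d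
    set G1 := Ex p q A (fun E => g (insert a E)) with hG1d
    set G0 := Ex p q A g with hG0d
    have H1 := ih (fun E => f (insert a E)) (fun E => g (insert a E))
      (fun E F h => hf _ _ (Finset.insert_subset_insert a h))
      (fun E F h => hg _ _ (Finset.insert_subset_insert a h))
    have H0 := ih f g hf hg
    have hF : F0 ≤ F1 :=
      Ex_mono p q hp hq fun E _ => hf E (insert a E) (Finset.subset_insert a E)
    have hG : G0 ≤ G1 :=
      Ex_mono p q hp hq fun E _ => hg E (insert a E) (Finset.subset_insert a E)
    have key : p * (F1 * G1) + q * (F0 * G0) - (p * F1 + q * F0) * (p * G1 + q * G0)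
        = p * q * ((F1 - F0) * (G1 - G0)) := by
      have hq2 : q = 1 - p := by linarith
      rw [hq2]; ring
    have hnn : 0 ≤ p * q * ((F1 - F0) * (G1 - G0)) :=
      mul_nonneg (mul_nonneg hp hq)
        (mul_nonneg (sub_nonneg.2 hF) (sub_nonneg.2 hG))
    have h1' := mul_le_mul_of_nonneg_left H1 hp
    have h0' := mul_le_mul_of_nonneg_left H0 hq
    linarith

lemma harris_anti (p q : ℝ) (hp : 0 ≤ p) (hq : 0 ≤ q) (hpq : p + q = 1) (A : Finset ι)
    (f g : Finset ι → ℝ) (hf : ∀ E F : Finset ι, E ⊆ F → f E ≤ f F)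
    (hg : ∀ E F : Finset ι, E ⊆ F → g F ≤ g E) :
    Ex p q A (fun E => f E * g E) ≤ Ex p q A f * Ex p q A g := by
  have h := harris p q hp hq hpq A f (fun E => 1 - g E) hf
    (fun E F hEF => by have := hg E F hEF; show 1 - g E ≤ 1 - g F; linarith)
  have h1 : Ex p q A (fun E => f E * (1 - g E))
      = Ex p q A f - Ex p q A (fun E => f E * g E) := by
    rw [show (fun E => f E * (1 - g E)) = (fun E => f E - f E * g E)
      from funext fun E => by ring, Ex_sub]
  have h2 : Ex p q A (fun E => 1 - g E) = 1 - Ex p q A g := by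
    rw [show (fun E => 1 - g E) = (fun E => (fun _ => (1:ℝ)) E - g E)
      from funext fun E => rfl, Ex_sub, Ex_one, hpq, one_pow]
  rw [h1, h2] at h
  nlinarith [h]

noncomputable def NN {τ : Type*} (D : τ → Finset ι) (J : Finset τ) (E : Finset ι) : ℝ :=
  ∏ t ∈ J, (1 - chi (D t) E)

section NNfacts

variable {τ : Type*} [DecidableEq τ] (D : τ → Finset ι)

lemma NN_nonneg (J : Finset τ) (E : Finset ι) : 0 ≤ NN D J E :=
  Finset.prod_nonneg fun t _ => by have := chi_le_one (D t) E; linarith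

lemma NN_le_one (J : Finset τ) (E : Finset ι) : NN D J E ≤ 1 :=
  Finset.prod_le_one (fun t _ => by have := chi_le_one (D t) E; linarith)
    (fun t _ => by have := chi_nonneg (D t) E; linarith)

lemma NN_anti (J : Finset τ) {E F : Finset ι} (h : E ⊆ F) : NN D J F ≤ NN D J E :=
  Finset.prod_le_prod (fun t _ => by have := chi_le_one (D t) F; linarith)
    (fun t _ => by have := chi_mono (D t) h; linarith)

lemma NN_insert {i : τ} {J : Finset τ} (hi : i ∉ J) (E : Finset ι) :
    NN D (insert i J) E = (1 - chi (D i) E) * NN D J E :=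
  Finset.prod_insert hi

end NNfacts

lemma one_sub_sum_le_prod {τ : Type*} [DecidableEq τ] (J : Finset τ) (x : τ → ℝ)
    (h0 : ∀ j ∈ J, 0 ≤ x j) (h1 : ∀ j ∈ J, x j ≤ 1) :
    1 - ∑ j ∈ J, x j ≤ ∏ j ∈ J, (1 - x j) := by
  induction J using Finset.induction_on with
  | empty => simp
  | @insert a J ha ih =>
    rw [Finset.sum_insert ha, Finset.prod_insert ha]
    have hxa0 := h0 a (Finset.mem_insert_self a J)
    have hxa1 := h1 a (Finset.mem_insert_self a J)
    have ih' := ih (fun j hj => h0 j (Finset.mem_insert_of_mem hj))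
      (fun j hj => h1 j (Finset.mem_insert_of_mem hj))
    have hs : 0 ≤ ∑ j ∈ J, x j :=
      Finset.sum_nonneg fun j hj => h0 j (Finset.mem_insert_of_mem hj)
    nlinarith [mul_le_mul_of_nonneg_left ih' (by linarith : (0:ℝ) ≤ 1 - x a),
      mul_nonneg hxa0 hs]

lemma janson {τ : Type*} [DecidableEq τ] (p q : ℝ) (hp : 0 ≤ p) (hq : 0 ≤ q)
    (hpq : p + q = 1) (A : Finset ι) (T : Finset τ) (D : τ → Finset ι)
    (hDA : ∀ t ∈ T, D t ⊆ A) :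
    Ex p q A (NN D T) ≤
      Real.exp (∑ t ∈ T,
        ((∑ t' ∈ (T.erase t).filter fun t' => ¬ Disjoint (D t) (D t'),
            p ^ (D t ∪ D t').card) - p ^ (D t).card)) := by
  suffices H : ∀ J : Finset τ, J ⊆ T →
      Ex p q A (NN D J) ≤ Real.exp (∑ t ∈ J,
        ((∑ t' ∈ (T.erase t).filter fun t' => ¬ Disjoint (D t) (D t'),
            p ^ (D t ∪ D t').card) - p ^ (D t).card)) by
    exact H T Finset.Subset.rfl
  intro J
  induction J using Finset.induction_on with
  | empty =>
    intro _
    rw [show NN D (∅ : Finset τ) = (fun _ => (1:ℝ)) from funext fun E => by simp [NN],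
      Ex_one, hpq, one_pow, Finset.sum_empty, Real.exp_zero]
  | @insert i J hi ih =>
    intro hsub
    have hiT : i ∈ T := hsub (Finset.mem_insert_self i J)
    have hJT : J ⊆ T := fun x hx => hsub (Finset.mem_insert_of_mem hx)
    have ihJ := ih hJT
    set Δ : ℝ := ∑ t' ∈ (T.erase i).filter fun t' => ¬ Disjoint (D i) (D t'),
      p ^ (D i ∪ D t').card with hΔdef
    set J0 := J.filter (fun j => Disjoint (D i) (D j)) with hJ0def
    set J1 := J.filter (fun j => ¬ Disjoint (D i) (D j)) with hJ1def
    have hsplit : ∀ E, NN D J E = NN D J0 E * NN D J1 E := fun E =>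
      (Finset.prod_filter_mul_prod_filter_not J (fun j => Disjoint (D i) (D j)) _).symm
    -- pointwise inequality
    have point : ∀ E, chi (D i) E * NN D J0 E
        - (∑ j ∈ J1, chi (D i ∪ D j) E) * NN D J0 E ≤ chi (D i) E * NN D J E := by
      intro E
      have hw := one_sub_sum_le_prod J1 (fun j => chi (D j) E)
        (fun j _ => chi_nonneg (D j) E) (fun j _ => chi_le_one (D j) E)
      have hw' : 1 - ∑ j ∈ J1, chi (D j) E ≤ NN D J1 E := hw
      have hsum : (∑ j ∈ J1, chi (D i ∪ D j) E)
          = chi (D i) E * ∑ j ∈ J1, chi (D j) E := by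
        rw [Finset.mul_sum]
        exact Finset.sum_congr rfl fun j _ => by rw [chi_union]
      have hc0 : 0 ≤ chi (D i) E * NN D J0 E :=
        mul_nonneg (chi_nonneg _ _) (NN_nonneg D J0 E)
      have hmul := mul_le_mul_of_nonneg_left hw' hc0
      calc chi (D i) E * NN D J0 E - (∑ j ∈ J1, chi (D i ∪ D j) E) * NN D J0 E
          = chi (D i) E * NN D J0 E * (1 - ∑ j ∈ J1, chi (D j) E) := by
            rw [hsum]; ring
        _ ≤ chi (D i) E * NN D J0 E * NN D J1 E := hmul
        _ = chi (D i) E * NN D J E := by rw [hsplit E]; ring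
    -- Ex of the lower bound
    have hExpoint : Ex p q A (fun E => chi (D i) E * NN D J0 E
          - (∑ j ∈ J1, chi (D i ∪ D j) E) * NN D J0 E)
        ≤ Ex p q A (fun E => chi (D i) E * NN D J E) :=
      Ex_mono p q hp hq fun E _ => point E
    have hNN0ig : ∀ E, NN D J0 (E \ D i) = NN D J0 E := by
      intro E
      unfold NN
      refine Finset.prod_congr rfl fun j hj => ?_
      have hdisj : Disjoint (D i) (D j) := (Finset.mem_filter.1 hj).2
      have hch : chi (D j) (E \ D i) = chi (D j) E := by
        unfold chi
        by_cases h : D j ⊆ E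
        · rw [if_pos (Finset.subset_sdiff.2 ⟨h, hdisj.symm⟩), if_pos h]
        · rw [if_neg (fun hc => h (Finset.subset_sdiff.1 hc).1), if_neg h]
      rw [hch]
    have e0 : Ex p q A (fun E => chi (D i) E * NN D J0 E)
        = p ^ (D i).card * Ex p q A (NN D J0) :=
      Ex_chi_mul p q hpq (hDA i hiT) (NN D J0) hNN0ig
    have e1 : ∀ j ∈ J1, Ex p q A (fun E => chi (D i ∪ D j) E * NN D J0 E)
        ≤ p ^ (D i ∪ D j).card * Ex p q A (NN D J0) := by
      intro j hj
      have hjJ : j ∈ J := (Finset.mem_filter.1 hj).1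
      have hU : D i ∪ D j ⊆ A := Finset.union_subset (hDA i hiT) (hDA j (hJT hjJ))
      have hh := harris_anti p q hp hq hpq A (chi (D i ∪ D j)) (NN D J0)
        (fun E F hEF => chi_mono _ hEF) (fun E F hEF => NN_anti D J0 hEF)
      rw [Ex_chi p q hpq hU] at hh
      exact hh
    have hEx1 : Ex p q A (fun E => (∑ j ∈ J1, chi (D i ∪ D j) E) * NN D J0 E)
        ≤ ∑ j ∈ J1, p ^ (D i ∪ D j).card * Ex p q A (NN D J0) := by
      have hcongr : Ex p q A (fun E => (∑ j ∈ J1, chi (D i ∪ D j) E) * NN D J0 E)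
          = ∑ j ∈ J1, Ex p q A (fun E => chi (D i ∪ D j) E * NN D J0 E) := by
        rw [← Ex_sum p q A J1 (fun j E => chi (D i ∪ D j) E * NN D J0 E)]
        exact Ex_congr p q fun E _ => by rw [Finset.sum_mul]
      rw [hcongr]
      exact Finset.sum_le_sum e1
    have hsumΔ : ∑ j ∈ J1, p ^ (D i ∪ D j).card ≤ Δ := by
      refine Finset.sum_le_sum_of_subset_of_nonneg ?_ (fun t' _ _ => pow_nonneg hp _)
      intro j hj
      rcases Finset.mem_filter.1 hj with ⟨hjJ, hnd⟩
      refine Finset.mem_filter.2 ⟨Finset.mem_erase.2 ⟨?_, hJT hjJ⟩, hnd⟩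
      intro hji
      exact hi (hji ▸ hjJ)
    have hNN0nn : 0 ≤ Ex p q A (NN D J0) :=
      Ex_nonneg p q hp hq fun E _ => NN_nonneg D J0 E
    -- main claim
    have claim : (p ^ (D i).card - Δ) * Ex p q A (NN D J)
        ≤ Ex p q A (fun E => chi (D i) E * NN D J E) := by
      have step1 : (p ^ (D i).card - Δ) * Ex p q A (NN D J0)
          ≤ Ex p q A (fun E => chi (D i) E * NN D J E) := by
        have hEsub : Ex p q A (fun E => chi (D i) E * NN D J0 E
              - (∑ j ∈ J1, chi (D i ∪ D j) E) * NN D J0 E)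
            = Ex p q A (fun E => chi (D i) E * NN D J0 E)
              - Ex p q A (fun E => (∑ j ∈ J1, chi (D i ∪ D j) E) * NN D J0 E) :=
          Ex_sub p q A _ _
        have hsum2 : ∑ j ∈ J1, p ^ (D i ∪ D j).card * Ex p q A (NN D J0)
            = (∑ j ∈ J1, p ^ (D i ∪ D j).card) * Ex p q A (NN D J0) :=
          (Finset.sum_mul _ _ _).symm
        have h3 : (∑ j ∈ J1, p ^ (D i ∪ D j).card) * Ex p q A (NN D J0)
            ≤ Δ * Ex p q A (NN D J0) :=
          mul_le_mul_of_nonneg_right hsumΔ hNN0nn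
        calc (p ^ (D i).card - Δ) * Ex p q A (NN D J0)
            = p ^ (D i).card * Ex p q A (NN D J0) - Δ * Ex p q A (NN D J0) := by ring
          _ ≤ Ex p q A (fun E => chi (D i) E * NN D J0 E)
              - Ex p q A (fun E => (∑ j ∈ J1, chi (D i ∪ D j) E) * NN D J0 E) := by
              rw [e0]
              have := hEx1.trans (le_of_eq hsum2)
              linarith
          _ = Ex p q A (fun E => chi (D i) E * NN D J0 E
              - (∑ j ∈ J1, chi (D i ∪ D j) E) * NN D J0 E) := hEsub.symm
          _ ≤ Ex p q A (fun E => chi (D i) E * NN D J E) := hExpoint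
      rcases le_or_gt 0 (p ^ (D i).card - Δ) with hc | hc
      · have hJle : Ex p q A (NN D J) ≤ Ex p q A (NN D J0) := by
          refine Ex_mono p q hp hq fun E _ => ?_
          rw [hsplit E]
          exact mul_le_of_le_one_right (NN_nonneg D J0 E) (NN_le_one D J1 E)
        exact (mul_le_mul_of_nonneg_left hJle hc).trans step1
      · have hJnn : 0 ≤ Ex p q A (NN D J) :=
          Ex_nonneg p q hp hq fun E _ => NN_nonneg D J E
        have hchinn : 0 ≤ Ex p q A (fun E => chi (D i) E * NN D J E) :=
          Ex_nonneg p q hp hq fun E _ =>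
            mul_nonneg (chi_nonneg _ _) (NN_nonneg D J E)
        nlinarith
    -- assemble
    have hstep : Ex p q A (NN D (insert i J))
        = Ex p q A (NN D J) - Ex p q A (fun E => chi (D i) E * NN D J E) := by
      rw [← Ex_sub p q A]
      exact Ex_congr p q fun E _ => by rw [NN_insert D hi E]; ring
    have hJnn : 0 ≤ Ex p q A (NN D J) :=
      Ex_nonneg p q hp hq fun E _ => NN_nonneg D J E
    have hexp : (1 - (p ^ (D i).card - Δ)) ≤ Real.exp (Δ - p ^ (D i).card) := by
      have := Real.add_one_le_exp (Δ - p ^ (D i).card)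
      linarith
    calc Ex p q A (NN D (insert i J))
        = Ex p q A (NN D J) - Ex p q A (fun E => chi (D i) E * NN D J E) := hstep
      _ ≤ Ex p q A (NN D J) - (p ^ (D i).card - Δ) * Ex p q A (NN D J) := by linarith
      _ = (1 - (p ^ (D i).card - Δ)) * Ex p q A (NN D J) := by ring
      _ ≤ Real.exp (Δ - p ^ (D i).card) * Ex p q A (NN D J) :=
          mul_le_mul_of_nonneg_right hexp hJnn
      _ ≤ Real.exp (Δ - p ^ (D i).card) * Real.exp (∑ t ∈ J,
            ((∑ t' ∈ (T.erase t).filter fun t' => ¬ Disjoint (D t) (D t'),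
              p ^ (D t ∪ D t').card) - p ^ (D t).card)) :=
          mul_le_mul_of_nonneg_left ihJ (Real.exp_nonneg _)
      _ = Real.exp (∑ t ∈ insert i J,
            ((∑ t' ∈ (T.erase t).filter fun t' => ¬ Disjoint (D t) (D t'),
              p ^ (D t ∪ D t').card) - p ^ (D t).card)) := by
          rw [Finset.sum_insert hi, Real.exp_add]

end CrossTrailProof

namespace CrossTrailProof

abbrev Tri (n : ℕ) := Σ _ : Fin n × Fin n, Finset (Fin n)

def TT (n k : ℕ) (S : Finset (Fin n)) : Finset (Tri n) :=
  (S ×ˢ (Finset.univ \ S)).sigma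
    (fun uv => Finset.powersetCard (k - 1) (Finset.univ \ {uv.1, uv.2}))

def DD {n : ℕ} (t : Tri n) : Finset (Finset (Fin n)) :=
  {insert t.1.1 t.2, insert t.1.2 t.2}

lemma mem_TT_mk {n k : ℕ} {S : Finset (Fin n)} {u v : Fin n} {W : Finset (Fin n)} :
    (⟨(u, v), W⟩ : Tri n) ∈ TT n k S ↔
      u ∈ S ∧ v ∉ S ∧ W.card = k - 1 ∧ u ∉ W ∧ v ∉ W := by
  simp only [TT, Finset.mem_sigma, Finset.mem_product, Finset.mem_sdiff, Finset.mem_univ,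
    true_and, Finset.mem_powersetCard, Finset.subset_sdiff, Finset.subset_univ,
    Finset.disjoint_insert_right, Finset.disjoint_singleton_right]
  tauto

lemma edge_ne {n k : ℕ} {S : Finset (Fin n)} {u v : Fin n} {W : Finset (Fin n)}
    (ht : (⟨(u, v), W⟩ : Tri n) ∈ TT n k S) : insert u W ≠ insert v W := by
  rw [mem_TT_mk] at ht
  obtain ⟨hu, hv, _, huW, _⟩ := ht
  intro h
  have huv : u ≠ v := fun hh => hv (hh ▸ hu)
  have : u ∈ insert v W := h ▸ Finset.mem_insert_self u W
  rcases Finset.mem_insert.1 this with h' | h'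
  exacts [huv h', huW h']

lemma DD_card {n k : ℕ} {S : Finset (Fin n)} {t : Tri n} (ht : t ∈ TT n k S) :
    (DD t).card = 2 := by
  obtain ⟨⟨u, v⟩, W⟩ := t
  exact Finset.card_pair (edge_ne ht)

lemma DD_subset {n k : ℕ} {S : Finset (Fin n)} (hk : 1 ≤ k) {t : Tri n}
    (ht : t ∈ TT n k S) : DD t ⊆ kSets n k := by
  obtain ⟨⟨u, v⟩, W⟩ := t
  rw [mem_TT_mk] at ht
  obtain ⟨_, _, hW, huW, hvW⟩ := ht
  intro e he
  rcases Finset.mem_insert.1 he with rfl | he'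
  · refine Finset.mem_powersetCard.2 ⟨Finset.subset_univ _, ?_⟩
    rw [Finset.card_insert_of_notMem huW, hW]; omega
  · rw [Finset.mem_singleton.1 he']
    refine Finset.mem_powersetCard.2 ⟨Finset.subset_univ _, ?_⟩
    rw [Finset.card_insert_of_notMem hvW, hW]; omega

lemma trail_of {n k : ℕ} {S : Finset (Fin n)} {t : Tri n} (ht : t ∈ TT n k S)
    {E : Finset (Finset (Fin n))} (hDE : DD t ⊆ E) : HasCrossingTrail n k S E := by
  obtain ⟨⟨u, v⟩, W⟩ := t
  rw [mem_TT_mk] at ht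
  obtain ⟨hu, hv, hW, huW, hvW⟩ := ht
  have huv : u ≠ v := fun hh => hv (hh ▸ hu)
  have h1 : insert u W ∈ E := hDE (Finset.mem_insert_self _ _)
  have h2 : insert v W ∈ E := hDE (by
    refine Finset.mem_insert.2 (Or.inr ?_); exact Finset.mem_singleton_self _)
  refine ⟨insert u W, h1, insert v W, h2, edge_ne (mem_TT_mk.2 ⟨hu, hv, hW, huW, hvW⟩),
    ?_, u, v, ?_, ?_, Or.inl ⟨hu, hv⟩⟩
  · have hI : insert u W ∩ insert v W = W := by
      ext x
      simp only [Finset.mem_inter, Finset.mem_insert]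
      constructor
      · rintro ⟨ha, hb⟩
        rcases ha with rfl | ha
        · rcases hb with hb | hb
          · exact absurd hb huv
          · exact absurd hb huW
        · exact ha
      · intro hx; exact ⟨Or.inr hx, Or.inr hx⟩
    rw [hI, hW]
  · ext x
    simp only [Finset.mem_sdiff, Finset.mem_insert, Finset.mem_singleton]
    constructor
    · rintro ⟨h1' | h1', h2'⟩
      · exact h1'
      · exact absurd (Or.inr h1') h2'
    · rintro rfl
      refine ⟨Or.inl rfl, fun h => ?_⟩
      rcases h with h | h
      exacts [huv h, huW h]
  · ext x
    simp only [Finset.mem_sdiff, Finset.mem_insert, Finset.mem_singleton]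
    constructor
    · rintro ⟨h1' | h1', h2'⟩
      · exact h1'
      · exact absurd (Or.inr h1') h2'
    · rintro rfl
      refine ⟨Or.inl rfl, fun h => ?_⟩
      rcases h with h | h
      exacts [(fun hh => huv hh.symm) h, hvW h]

lemma insert_eq_destruct {n : ℕ} {a b : Fin n} {X Y : Finset (Fin n)}
    (h : insert a X = insert b Y) (haX : a ∉ X) (hbY : b ∉ Y) :
    (a = b ∧ X = Y) ∨ (a ∈ Y ∧ b ∈ X) := by
  by_cases hab : a = b
  · subst hab
    left
    refine ⟨rfl, ?_⟩
    rw [← Finset.erase_insert haX, h, Finset.erase_insert hbY]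
  · right
    constructor
    · have : a ∈ insert b Y := h ▸ Finset.mem_insert_self a X
      rcases Finset.mem_insert.1 this with h' | h'
      exacts [absurd h' hab, h']
    · have : b ∈ insert a X := h.symm ▸ Finset.mem_insert_self b Y
      rcases Finset.mem_insert.1 this with h' | h'
      exacts [absurd h'.symm hab, h']

lemma pair_eq_cases {α : Type*} [DecidableEq α] {a b c d : α}
    (h : ({a, b} : Finset α) = {c, d}) (hab : a ≠ b) :
    (a = c ∧ b = d) ∨ (a = d ∧ b = c) := by
  have ha : a ∈ ({c, d} : Finset α) := h ▸ Finset.mem_insert_self a {b}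
  have hb : b ∈ ({c, d} : Finset α) := h ▸ Finset.mem_insert.2
    (Or.inr (Finset.mem_singleton_self b))
  simp only [Finset.mem_insert, Finset.mem_singleton] at ha hb
  rcases ha with rfl | rfl
  · rcases hb with hb | rfl
    · exact absurd hb.symm hab
    · exact Or.inl ⟨rfl, rfl⟩
  · rcases hb with rfl | hb
    · exact Or.inr ⟨rfl, rfl⟩
    · exact absurd hb.symm hab

lemma DD_inj {n k : ℕ} {S : Finset (Fin n)} {t t' : Tri n} (ht : t ∈ TT n k S)
    (ht' : t' ∈ TT n k S) (h : DD t = DD t') : t = t' := by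
  obtain ⟨⟨u, v⟩, W⟩ := t
  obtain ⟨⟨u', v'⟩, W'⟩ := t'
  have hne := edge_ne ht
  rw [mem_TT_mk] at ht ht'
  obtain ⟨hu, hv, hW, huW, hvW⟩ := ht
  obtain ⟨hu', hv', hW', huW', hvW'⟩ := ht'
  have huv : u ≠ v := fun hh => hv (hh ▸ hu)
  rcases pair_eq_cases h hne with ⟨h1, h2⟩ | ⟨h1, h2⟩
  · -- insert u W = insert u' W', insert v W = insert v' W'
    rcases insert_eq_destruct h1 huW huW' with ⟨huu, hWW⟩ | ⟨huY, _⟩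
    · subst huu; subst hWW
      rcases insert_eq_destruct h2 hvW hvW' with ⟨hvv, _⟩ | ⟨hvY, _⟩
      · subst hvv; rfl
      · exact absurd hvY hvW
    · -- u ∈ W' ⊆ insert v' W' = insert v W, contradiction
      have : u ∈ insert v W := by
        rw [h2]
        exact Finset.mem_insert_of_mem huY
      rcases Finset.mem_insert.1 this with h' | h'
      exacts [absurd h' huv, absurd h' huW]
  · -- insert u W = insert v' W', insert v W = insert u' W'
    exfalso
    have huv' : u ≠ v' := fun hh => hv' (hh ▸ hu)
    have huY : u ∈ W' := by
      have : u ∈ insert v' W' := h1 ▸ Finset.mem_insert_self u W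
      rcases Finset.mem_insert.1 this with h' | h'
      exacts [absurd h' huv', h']
    have : u ∈ insert v W := by
      rw [h2]
      exact Finset.mem_insert_of_mem huY
    rcases Finset.mem_insert.1 this with h' | h'
    exacts [huv h', huW h']

lemma TT_card (n k : ℕ) (S : Finset (Fin n)) :
    (TT n k S).card = S.card * (n - S.card) * (n - 2).choose (k - 1) := by
  rw [TT, Finset.card_sigma]
  have hconst : ∀ uv ∈ S ×ˢ (Finset.univ \ S),
      (Finset.powersetCard (k - 1)
        (Finset.univ \ {uv.1, uv.2} : Finset (Fin n))).card = (n - 2).choose (k - 1) := by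
    rintro ⟨u, v⟩ huv
    rw [Finset.mem_product, Finset.mem_sdiff] at huv
    have huvne : u ≠ v := fun h => huv.2.2 (h ▸ huv.1)
    rw [Finset.card_powersetCard]
    congr 1
    rw [Finset.card_sdiff_of_subset (Finset.subset_univ _), Finset.card_univ, Fintype.card_fin,
      Finset.card_pair huvne]
  rw [Finset.sum_congr rfl hconst, Finset.sum_const, smul_eq_mul, Finset.card_product,
    Finset.card_sdiff_of_subset (Finset.subset_univ S), Finset.card_univ, Fintype.card_fin]

lemma Bcard1 (n k : ℕ) (S : Finset (Fin n)) {e : Finset (Fin n)} (he : e.card = k) :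
    ((TT n k S).filter (fun t' => insert t'.1.1 t'.2 = e)).card ≤ k * n := by
  have hle := Finset.card_le_card_of_injOn
    (s := (TT n k S).filter (fun t' => insert t'.1.1 t'.2 = e))
    (t := e ×ˢ (Finset.univ : Finset (Fin n))) (fun t' : Tri n => (t'.1.1, t'.1.2)) ?_ ?_
  · refine hle.trans (le_of_eq ?_)
    rw [Finset.card_product, Finset.card_univ, Fintype.card_fin, he]
  · intro a ha
    rcases Finset.mem_filter.1 ha with ⟨_, hae⟩
    exact Finset.mem_product.2 ⟨hae ▸ Finset.mem_insert_self _ _, Finset.mem_univ _⟩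
  · intro a ha b hb hab
    rcases Finset.mem_filter.1 (Finset.mem_coe.1 ha) with ⟨haT, hae⟩
    rcases Finset.mem_filter.1 (Finset.mem_coe.1 hb) with ⟨hbT, hbe⟩
    obtain ⟨⟨u, v⟩, W⟩ := a
    obtain ⟨⟨u', v'⟩, W'⟩ := b
    simp only [Prod.mk.injEq] at hab
    obtain ⟨h1, h2⟩ := hab
    rw [mem_TT_mk] at haT hbT
    have hW : W = e.erase u := by
      rw [← hae, Finset.erase_insert haT.2.2.2.1]
    have hW' : W' = e.erase u' := by
      rw [← hbe, Finset.erase_insert hbT.2.2.2.1]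
    subst h1; subst h2
    rw [hW, hW']

lemma Bcard2 (n k : ℕ) (S : Finset (Fin n)) {e : Finset (Fin n)} (he : e.card = k) :
    ((TT n k S).filter (fun t' => insert t'.1.2 t'.2 = e)).card ≤ k * n := by
  have hle := Finset.card_le_card_of_injOn
    (s := (TT n k S).filter (fun t' => insert t'.1.2 t'.2 = e))
    (t := e ×ˢ (Finset.univ : Finset (Fin n))) (fun t' : Tri n => (t'.1.2, t'.1.1)) ?_ ?_
  · refine hle.trans (le_of_eq ?_)
    rw [Finset.card_product, Finset.card_univ, Fintype.card_fin, he]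
  · intro a ha
    rcases Finset.mem_filter.1 ha with ⟨_, hae⟩
    exact Finset.mem_product.2 ⟨hae ▸ Finset.mem_insert_self _ _, Finset.mem_univ _⟩
  · intro a ha b hb hab
    rcases Finset.mem_filter.1 (Finset.mem_coe.1 ha) with ⟨haT, hae⟩
    rcases Finset.mem_filter.1 (Finset.mem_coe.1 hb) with ⟨hbT, hbe⟩
    obtain ⟨⟨u, v⟩, W⟩ := a
    obtain ⟨⟨u', v'⟩, W'⟩ := b
    simp only [Prod.mk.injEq] at hab
    obtain ⟨h1, h2⟩ := hab
    rw [mem_TT_mk] at haT hbT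
    have hW : W = e.erase v := by
      rw [← hae, Finset.erase_insert haT.2.2.2.2]
    have hW' : W' = e.erase v' := by
      rw [← hbe, Finset.erase_insert hbT.2.2.2.2]
    subst h1; subst h2
    rw [hW, hW']

lemma edge1_card {n k : ℕ} {S : Finset (Fin n)} (hk : 1 ≤ k) {t : Tri n}
    (ht : t ∈ TT n k S) : (insert t.1.1 t.2).card = k := by
  obtain ⟨⟨u, v⟩, W⟩ := t
  rw [mem_TT_mk] at ht
  rw [Finset.card_insert_of_notMem ht.2.2.2.1, ht.2.2.1]
  omega

lemma edge2_card {n k : ℕ} {S : Finset (Fin n)} (hk : 1 ≤ k) {t : Tri n}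
    (ht : t ∈ TT n k S) : (insert t.1.2 t.2).card = k := by
  obtain ⟨⟨u, v⟩, W⟩ := t
  rw [mem_TT_mk] at ht
  rw [Finset.card_insert_of_notMem ht.2.2.2.2, ht.2.2.1]
  omega

lemma nbr_card (n k : ℕ) (S : Finset (Fin n)) (hk : 1 ≤ k) {t : Tri n}
    (ht : t ∈ TT n k S) :
    (((TT n k S).erase t).filter fun t' => ¬ Disjoint (DD t) (DD t')).card
      ≤ 4 * (k * n) := by
  have hsub : ((TT n k S).erase t).filter (fun t' => ¬ Disjoint (DD t) (DD t'))
      ⊆ (((TT n k S).filter (fun t' => insert t'.1.1 t'.2 = insert t.1.1 t.2))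
          ∪ ((TT n k S).filter (fun t' => insert t'.1.2 t'.2 = insert t.1.1 t.2)))
        ∪ (((TT n k S).filter (fun t' => insert t'.1.1 t'.2 = insert t.1.2 t.2))
          ∪ ((TT n k S).filter (fun t' => insert t'.1.2 t'.2 = insert t.1.2 t.2))) := by
    intro t' ht'
    rcases Finset.mem_filter.1 ht' with ⟨hte, hnd⟩
    have htT : t' ∈ TT n k S := Finset.mem_of_mem_erase hte
    rcases Finset.not_disjoint_iff.1 hnd with ⟨e, he1, he2⟩
    rcases Finset.mem_insert.1 he1 with h1 | h1
    · rcases Finset.mem_insert.1 he2 with h2 | h2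
      · exact Finset.mem_union_left _ (Finset.mem_union_left _
          (Finset.mem_filter.2 ⟨htT, by rw [← h2]; exact h1⟩))
      · rw [Finset.mem_singleton] at h2
        exact Finset.mem_union_left _ (Finset.mem_union_right _
          (Finset.mem_filter.2 ⟨htT, by rw [← h2]; exact h1⟩))
    · rw [Finset.mem_singleton] at h1
      rcases Finset.mem_insert.1 he2 with h2 | h2
      · exact Finset.mem_union_right _ (Finset.mem_union_left _
          (Finset.mem_filter.2 ⟨htT, by rw [← h2]; exact h1⟩))
      · rw [Finset.mem_singleton] at h2
        exact Finset.mem_union_right _ (Finset.mem_union_right _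
          (Finset.mem_filter.2 ⟨htT, by rw [← h2]; exact h1⟩))
  have hc1 := Bcard1 n k S (edge1_card hk ht)
  have hc2 := Bcard2 n k S (edge1_card hk ht)
  have hc3 := Bcard1 n k S (edge2_card hk ht)
  have hc4 := Bcard2 n k S (edge2_card hk ht)
  have := Finset.card_le_card hsub
  have hu1 := Finset.card_union_le
    ((TT n k S).filter (fun t' => insert t'.1.1 t'.2 = insert t.1.1 t.2))
    ((TT n k S).filter (fun t' => insert t'.1.2 t'.2 = insert t.1.1 t.2))
  have hu2 := Finset.card_union_le
    ((TT n k S).filter (fun t' => insert t'.1.1 t'.2 = insert t.1.2 t.2))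
    ((TT n k S).filter (fun t' => insert t'.1.2 t'.2 = insert t.1.2 t.2))
  have hu3 := Finset.card_union_le
    (((TT n k S).filter (fun t' => insert t'.1.1 t'.2 = insert t.1.1 t.2))
      ∪ ((TT n k S).filter (fun t' => insert t'.1.2 t'.2 = insert t.1.1 t.2)))
    (((TT n k S).filter (fun t' => insert t'.1.1 t'.2 = insert t.1.2 t.2))
      ∪ ((TT n k S).filter (fun t' => insert t'.1.2 t'.2 = insert t.1.2 t.2)))
  omega

end CrossTrailProof

namespace CrossTrailProof

lemma dTot_le (n k : ℕ) (S : Finset (Fin n)) (hk : 1 ≤ k) (p : ℝ) (hp0 : 0 ≤ p)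
    (hp1 : p ≤ 1) {t : Tri n} (ht : t ∈ TT n k S) :
    (∑ t' ∈ ((TT n k S).erase t).filter fun t' => ¬ Disjoint (DD t) (DD t'),
      p ^ (DD t ∪ DD t').card) ≤ 4 * ((k : ℝ) * n) * p ^ 3 := by
  have hterm : ∀ t' ∈ ((TT n k S).erase t).filter
      (fun t' => ¬ Disjoint (DD t) (DD t')), p ^ (DD t ∪ DD t').card ≤ p ^ 3 := by
    intro t' ht'
    rcases Finset.mem_filter.1 ht' with ⟨hte, _⟩
    have htT' : t' ∈ TT n k S := Finset.mem_of_mem_erase hte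
    have htne : t' ≠ t := Finset.ne_of_mem_erase hte
    apply pow_le_pow_of_le_one hp0 hp1
    have hns : ¬ DD t ⊆ DD t' := by
      intro hsub
      have heq := Finset.eq_of_subset_of_card_le hsub
        (by rw [DD_card htT', DD_card ht])
      exact htne (DD_inj ht htT' heq).symm
    obtain ⟨x, hx1, hx2⟩ := Finset.not_subset.1 hns
    have hins : insert x (DD t') ⊆ DD t ∪ DD t' :=
      Finset.insert_subset (Finset.mem_union_left _ hx1) Finset.subset_union_right
    have hcard3 : (insert x (DD t')).card = 3 := by
      rw [Finset.card_insert_of_notMem hx2, DD_card htT']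
    calc 3 = (insert x (DD t')).card := hcard3.symm
      _ ≤ (DD t ∪ DD t').card := Finset.card_le_card hins
  have hsum := Finset.sum_le_card_nsmul _ _ _ hterm
  rw [nsmul_eq_mul] at hsum
  refine hsum.trans ?_
  have hcn : ((((TT n k S).erase t).filter
      fun t' => ¬ Disjoint (DD t) (DD t')).card : ℝ) ≤ 4 * ((k : ℝ) * n) := by
    have := nbr_card n k S hk ht
    exact_mod_cast this
  exact mul_le_mul_of_nonneg_right hcn (by positivity)

lemma prH_le_Ex (n k : ℕ) (S : Finset (Fin n)) (p : ℝ) (hp0 : 0 ≤ p) (hp1 : p ≤ 1) :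
    prH n k p (fun E => ¬ HasCrossingTrail n k S E)
      ≤ Ex p (1 - p) (kSets n k) (NN DD (TT n k S)) := by
  unfold prH Ex
  refine Finset.sum_le_sum fun E hE => ?_
  have hw : 0 ≤ p ^ E.card * (1 - p) ^ ((kSets n k).card - E.card) :=
    mul_nonneg (pow_nonneg hp0 _) (pow_nonneg (by linarith) _)
  by_cases hT : HasCrossingTrail n k S E
  · rw [if_neg (not_not_intro hT)]
    exact mul_nonneg hw (NN_nonneg DD (TT n k S) E)
  · rw [if_pos hT]
    have hNN : NN DD (TT n k S) E = 1 := by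
      unfold NN
      refine Finset.prod_eq_one fun t ht => ?_
      have hchi : chi (DD t) E = 0 := by
        unfold chi
        rw [if_neg]
        intro hsub
        exact hT (trail_of ht hsub)
      rw [hchi]
      ring
    rw [hNN, mul_one]

noncomputable def ppN (k : ℕ) (ε : ℝ) (n : ℕ) : ℝ :=
  (1 + ε) * Real.sqrt (((k - 1).factorial : ℝ) * Real.log n / (n : ℝ) ^ k)

noncomputable def dmain (k : ℕ) (ε : ℝ) (n : ℕ) : ℝ :=
  (((k - 1).factorial * (n - 2).choose (k - 1) : ℕ) : ℝ)
      * (1 - 4 * ((k : ℝ) * n) * ppN k ε n) / (n : ℝ) ^ (k - 1) - 1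

lemma ppN_nonneg (k : ℕ) {ε : ℝ} (hε : 0 < ε) (n : ℕ) : 0 ≤ ppN k ε n :=
  mul_nonneg (by linarith) (Real.sqrt_nonneg _)

lemma main_est (k : ℕ) (hk : 3 ≤ k) (ε : ℝ) (hε : 0 < ε) (n : ℕ) (S : Finset (Fin n))
    (hS1 : 1 ≤ S.card) (hS2 : 2 * S.card ≤ n) (hp1 : ppN k ε n ≤ 1) :
    prH n k (ppN k ε n) (fun E => ¬ HasCrossingTrail n k S E) ≤
      Real.exp (-(1 + dmain k ε n) * (1 + ε) ^ 2 * (S.card : ℝ) *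
        (((n : ℝ) - (S.card : ℝ)) / (n : ℝ)) * Real.log n) := by
  have hn2 : 2 ≤ n := by omega
  have hk1 : 1 ≤ k := by omega
  set p := ppN k ε n with hpdef
  have hp0 : 0 ≤ p := ppN_nonneg k hε n
  have hq0 : 0 ≤ 1 - p := by linarith
  have hpq : p + (1 - p) = 1 := by ring
  have h1 := prH_le_Ex n k S p hp0 hp1
  have h2 := janson p (1 - p) hp0 hq0 hpq (kSets n k) (TT n k S) DD
    (fun t ht => DD_subset hk1 ht)
  -- bound the sum in the exponent
  have h3 : (∑ t ∈ TT n k S,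
      ((∑ t' ∈ ((TT n k S).erase t).filter fun t' => ¬ Disjoint (DD t) (DD t'),
          p ^ (DD t ∪ DD t').card) - p ^ (DD t).card))
      ≤ ((TT n k S).card : ℝ) * (4 * ((k : ℝ) * n) * p ^ 3 - p ^ 2) := by
    have hterm : ∀ t ∈ TT n k S,
        ((∑ t' ∈ ((TT n k S).erase t).filter fun t' => ¬ Disjoint (DD t) (DD t'),
          p ^ (DD t ∪ DD t').card) - p ^ (DD t).card)
        ≤ 4 * ((k : ℝ) * n) * p ^ 3 - p ^ 2 := by
      intro t ht
      have hd := dTot_le n k S hk1 p hp0 hp1 ht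
      have hc : p ^ (DD t).card = p ^ 2 := by rw [DD_card ht]
      rw [hc]
      linarith
    have := Finset.sum_le_card_nsmul _ _ _ hterm
    rwa [nsmul_eq_mul] at this
  -- numeric identity
  have hn0 : (0 : ℝ) < n := by exact_mod_cast (by omega : 0 < n)
  have hseqN : S.card ≤ n := by simpa using Finset.card_le_univ S
  have hseq : (S.card : ℝ) ≤ n := by exact_mod_cast hseqN
  have hlog0 : 0 ≤ Real.log n :=
    Real.log_nonneg (by exact_mod_cast (by omega : 1 ≤ n))
  have hsq : p ^ 2 = (1 + ε) ^ 2 * (((k - 1).factorial : ℝ) * Real.log n / (n : ℝ) ^ k) := by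
    rw [hpdef]
    unfold ppN
    rw [mul_pow, Real.sq_sqrt]
    positivity
  have hkpow : (n : ℝ) ^ k = (n : ℝ) ^ (k - 1) * n := by
    rw [← pow_succ]
    congr 1
    omega
  have hcardT : ((TT n k S).card : ℝ)
      = (S.card : ℝ) * ((n : ℝ) - S.card) * ((n - 2).choose (k - 1) : ℝ) := by
    rw [TT_card]
    push_cast [Nat.cast_sub hseqN]
    ring
  have h4 : ((TT n k S).card : ℝ) * (4 * ((k : ℝ) * n) * p ^ 3 - p ^ 2)
      = -(1 + dmain k ε n) * (1 + ε) ^ 2 * (S.card : ℝ) *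
        (((n : ℝ) - (S.card : ℝ)) / (n : ℝ)) * Real.log n := by
    unfold dmain
    rw [← hpdef, hcardT]
    have hp3 : p ^ 3 = p * p ^ 2 := by ring
    rw [hp3, hsq, hkpow]
    have hpow0 : ((n : ℝ) ^ (k - 1)) ≠ 0 := by positivity
    push_cast
    field_simp
    ring
  calc prH n k p (fun E => ¬ HasCrossingTrail n k S E)
      ≤ Ex p (1 - p) (kSets n k) (NN DD (TT n k S)) := h1
    _ ≤ Real.exp (∑ t ∈ TT n k S,
        ((∑ t' ∈ ((TT n k S).erase t).filter fun t' => ¬ Disjoint (DD t) (DD t'),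
            p ^ (DD t ∪ DD t').card) - p ^ (DD t).card)) := h2
    _ ≤ Real.exp (((TT n k S).card : ℝ) * (4 * ((k : ℝ) * n) * p ^ 3 - p ^ 2)) :=
        Real.exp_le_exp.2 h3
    _ = Real.exp (-(1 + dmain k ε n) * (1 + ε) ^ 2 * (S.card : ℝ) *
        (((n : ℝ) - (S.card : ℝ)) / (n : ℝ)) * Real.log n) := by rw [h4]

end CrossTrailProof

namespace CrossTrailProof

lemma np_tendsto (k : ℕ) (hk : 3 ≤ k) (ε : ℝ) (hε : 0 < ε) :
    Tendsto (fun n : ℕ => (n : ℝ) * ppN k ε n) atTop (nhds 0) := by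
  have hbase : Tendsto (fun x : ℝ => Real.log x / x) atTop (nhds 0) :=
    Real.isLittleO_log_id_atTop.tendsto_div_nhds_zero
  have hN : Tendsto (fun n : ℕ => Real.log n / n) atTop (nhds 0) :=
    hbase.comp tendsto_natCast_atTop_atTop
  have h0 : Tendsto (fun n : ℕ => ((k - 1).factorial : ℝ) * (Real.log n / n)) atTop
      (nhds 0) := by
    have := hN.const_mul (((k - 1).factorial : ℝ))
    simpa using this
  have h1 : Tendsto (fun n : ℕ =>
      Real.sqrt (((k - 1).factorial : ℝ) * (Real.log n / n))) atTop (nhds 0) := by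
    have hcomp := (Real.continuous_sqrt.tendsto 0).comp h0
    rw [Real.sqrt_zero] at hcomp
    exact hcomp
  have hF : Tendsto (fun n : ℕ =>
      (1 + ε) * Real.sqrt (((k - 1).factorial : ℝ) * (Real.log n / n))) atTop
      (nhds 0) := by
    have := h1.const_mul (1 + ε)
    simpa [mul_comm] using this
  refine squeeze_zero' ?_ ?_ hF
  · filter_upwards with n
    exact mul_nonneg (Nat.cast_nonneg n) (ppN_nonneg k hε n)
  · filter_upwards [eventually_ge_atTop 1] with n hn1
    have hn0 : (0 : ℝ) < n := by exact_mod_cast hn1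
    have hn1' : (1 : ℝ) ≤ n := by exact_mod_cast hn1
    have hlog0 : 0 ≤ Real.log n := Real.log_nonneg hn1'
    have hXnn : 0 ≤ ((k - 1).factorial : ℝ) * Real.log n / (n : ℝ) ^ k := by positivity
    have heq : (1 + ε) *
        Real.sqrt ((n : ℝ) ^ 2 * (((k - 1).factorial : ℝ) * Real.log n / (n : ℝ) ^ k))
        = (n : ℝ) * ppN k ε n := by
      unfold ppN
      rw [Real.sqrt_mul (sq_nonneg _), Real.sqrt_sq hn0.le]
      ring
    rw [← heq]
    refine mul_le_mul_of_nonneg_left ?_ (by linarith)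
    refine Real.sqrt_le_sqrt ?_
    have hpow : (n : ℝ) ^ 2 * (n : ℝ) ≤ (n : ℝ) ^ k := by
      calc (n : ℝ) ^ 2 * (n : ℝ) = (n : ℝ) ^ 3 := by ring
        _ ≤ (n : ℝ) ^ k := pow_le_pow_right₀ hn1' hk
    have hdiv : (n : ℝ) ^ 2 / (n : ℝ) ^ k ≤ 1 / (n : ℝ) := by
      rw [div_le_div_iff₀ (by positivity) hn0]
      linarith
    calc (n : ℝ) ^ 2 * (((k - 1).factorial : ℝ) * Real.log n / (n : ℝ) ^ k)
        = ((k - 1).factorial : ℝ) * Real.log n * ((n : ℝ) ^ 2 / (n : ℝ) ^ k) := by ring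
      _ ≤ ((k - 1).factorial : ℝ) * Real.log n * (1 / (n : ℝ)) := by
          refine mul_le_mul_of_nonneg_left hdiv (by positivity)
      _ = ((k - 1).factorial : ℝ) * (Real.log n / (n : ℝ)) := by ring

lemma dmain_tendsto (k : ℕ) (hk : 3 ≤ k) (ε : ℝ) (hε : 0 < ε) :
    Tendsto (dmain k ε) atTop (nhds 0) := by
  have hnp := np_tendsto k hk ε hε
  -- c1 n → 1
  have hc1 : Tendsto (fun n : ℕ =>
      (((k - 1).factorial * (n - 2).choose (k - 1) : ℕ) : ℝ) / (n : ℝ) ^ (k - 1))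
      atTop (nhds 1) := by
    have heach : ∀ i : ℕ, Tendsto (fun n : ℕ => ((n - 2 - i : ℕ) : ℝ) / (n : ℝ))
        atTop (nhds 1) := by
      intro i
      have hlim : Tendsto (fun n : ℕ => 1 - ((2 + i : ℕ) : ℝ) / (n : ℝ)) atTop
          (nhds 1) := by
        have := tendsto_const_div_atTop_nhds_zero_nat (((2 + i : ℕ) : ℝ))
        have h2 := (tendsto_const_nhds (x := (1 : ℝ)) (f := atTop)).sub this
        simpa using h2
      refine Tendsto.congr' ?_ hlim
      filter_upwards [eventually_ge_atTop (2 + i + 1)] with n hn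
      have hn0 : (n : ℝ) ≠ 0 := by
        have : 0 < n := by omega
        exact_mod_cast this.ne'
      have hsub : ((n - 2 - i : ℕ) : ℝ) = (n : ℝ) - ((2 + i : ℕ) : ℝ) := by
        have : n - 2 - i = n - (2 + i) := by omega
        rw [this, Nat.cast_sub (by omega)]
      rw [hsub]
      field_simp
    have hprod : Tendsto (fun n : ℕ =>
        ∏ i ∈ Finset.range (k - 1), (((n - 2 - i : ℕ) : ℝ) / (n : ℝ))) atTop
        (nhds (∏ _i ∈ Finset.range (k - 1), (1 : ℝ))) :=
      tendsto_finset_prod _ (fun i _ => heach i)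
    rw [Finset.prod_const_one] at hprod
    refine Tendsto.congr' ?_ hprod
    filter_upwards [eventually_ge_atTop 1] with n hn
    have hdesc : (k - 1).factorial * (n - 2).choose (k - 1)
        = (n - 2).descFactorial (k - 1) :=
      (Nat.descFactorial_eq_factorial_mul_choose _ _).symm
    rw [Finset.prod_div_distrib, Finset.prod_const, Finset.card_range, hdesc,
      Nat.descFactorial_eq_prod_range, Nat.cast_prod]
  have hfac : Tendsto (fun n : ℕ =>
      (((k - 1).factorial * (n - 2).choose (k - 1) : ℕ) : ℝ) / (n : ℝ) ^ (k - 1)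
        * (1 - 4 * (k : ℝ) * ((n : ℝ) * ppN k ε n)) - 1) atTop
      (nhds (1 * (1 - 4 * (k : ℝ) * 0) - 1)) := by
    exact (hc1.mul ((tendsto_const_nhds (x := (1:ℝ)) (f := atTop)).sub
      (hnp.const_mul (4 * (k : ℝ))))).sub tendsto_const_nhds
  have : (1 : ℝ) * (1 - 4 * (k : ℝ) * 0) - 1 = 0 := by ring
  rw [this] at hfac
  refine hfac.congr fun n => ?_
  unfold dmain
  ring

end CrossTrailProof

namespace CrossTrailProof

lemma prH_le_G (n k : ℕ) (p : ℝ) (P : Finset (Finset (Fin n)) → Prop) :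
    prH n k p P ≤ (|p| + |1 - p|) ^ (kSets n k).card := by
  unfold prH
  have hstep : ∀ E ∈ (kSets n k).powerset,
      (if P E then p ^ E.card * (1 - p) ^ ((kSets n k).card - E.card) else 0)
        ≤ |p| ^ E.card * |1 - p| ^ ((kSets n k).card - E.card) := by
    intro E _
    by_cases hPE : P E
    · rw [if_pos hPE]
      have h1 : p ^ E.card * (1 - p) ^ ((kSets n k).card - E.card)
          ≤ |p ^ E.card * (1 - p) ^ ((kSets n k).card - E.card)| := le_abs_self _
      rwa [abs_mul, abs_pow, abs_pow] at h1
    · rw [if_neg hPE]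
      positivity
  refine (Finset.sum_le_sum hstep).trans (le_of_eq ?_)
  have := Ex_one |p| |1 - p| (kSets n k)
  rw [← this]
  unfold Ex
  exact Finset.sum_congr rfl fun E _ => (mul_one _).symm

noncomputable def dsmall (k : ℕ) (ε : ℝ) (n : ℕ) : ℝ :=
  -1 - 2 * Real.log ((|ppN k ε n| + |1 - ppN k ε n|) ^ (kSets n k).card)
      / ((1 + ε) ^ 2 * Real.log n)

lemma small_est (k : ℕ) (ε : ℝ) (hε : 0 < ε) (n : ℕ) (S : Finset (Fin n))
    (hS1 : 1 ≤ S.card) (hS2 : 2 * S.card ≤ n) :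
    prH n k (ppN k ε n) (fun E => ¬ HasCrossingTrail n k S E) ≤
      Real.exp (-(1 + dsmall k ε n) * (1 + ε) ^ 2 * (S.card : ℝ) *
        (((n : ℝ) - (S.card : ℝ)) / (n : ℝ)) * Real.log n) := by
  have hn2 : 2 ≤ n := by omega
  set p := ppN k ε n with hpdef
  set G := (|p| + |1 - p|) ^ (kSets n k).card with hGdef
  have hbase1 : (1 : ℝ) ≤ |p| + |1 - p| := by
    calc (1 : ℝ) = p + (1 - p) := by ring
      _ ≤ |p| + |1 - p| := add_le_add (le_abs_self _) (le_abs_self _)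
  have hG1 : (1 : ℝ) ≤ G := one_le_pow₀ hbase1
  have hG0 : (0 : ℝ) < G := lt_of_lt_of_le one_pos hG1
  have hlogG : 0 ≤ Real.log G := Real.log_nonneg hG1
  have hlogn : 0 < Real.log n := Real.log_pos (by exact_mod_cast (by omega : (1 : ℕ) < n))
  have hn0 : (0 : ℝ) < n := by exact_mod_cast (by omega : (0 : ℕ) < n)
  have hs1 : (1 : ℝ) ≤ (S.card : ℝ) := by exact_mod_cast hS1
  have hs2 : 2 * (S.card : ℝ) ≤ (n : ℝ) := by exact_mod_cast hS2
  have hX : Real.log G ≤ -(1 + dsmall k ε n) * (1 + ε) ^ 2 * (S.card : ℝ) *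
      (((n : ℝ) - (S.card : ℝ)) / (n : ℝ)) * Real.log n := by
    have hA : -(1 + dsmall k ε n) * (1 + ε) ^ 2 * (S.card : ℝ) *
        (((n : ℝ) - (S.card : ℝ)) / (n : ℝ)) * Real.log n
        = Real.log G * (2 * (S.card : ℝ) * (((n : ℝ) - (S.card : ℝ)) / (n : ℝ))) := by
      unfold dsmall
      rw [← hpdef, ← hGdef]
      have hne : (1 + ε) ^ 2 * Real.log n ≠ 0 := by positivity
      field_simp
      ring
    rw [hA]
    have h1x : (1 : ℝ) ≤ 2 * (S.card : ℝ) * (((n : ℝ) - (S.card : ℝ)) / (n : ℝ)) := by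
      rw [show 2 * (S.card : ℝ) * (((n : ℝ) - (S.card : ℝ)) / (n : ℝ))
          = (2 * (S.card : ℝ) * ((n : ℝ) - (S.card : ℝ))) / (n : ℝ) by ring,
        one_le_div hn0]
      nlinarith [mul_nonneg (sub_nonneg.2 hs1) (sub_nonneg.2 hs2)]
    exact le_mul_of_one_le_right hlogG h1x
  calc prH n k p (fun E => ¬ HasCrossingTrail n k S E) ≤ G := prH_le_G n k p _
    _ = Real.exp (Real.log G) := (Real.exp_log hG0).symm
    _ ≤ _ := Real.exp_le_exp.2 hX

end CrossTrailProof


/-- Let `k ≥ 3`, `ε > 0` and `p = (1+ε)·√((k-1)!·log n / n^k)`. Then, uniformly over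
all sets `S ⊆ [n]` with `1 ≤ |S| = s ≤ n/2`, the probability that `H_{n,p}^{(k)}`
contains no `1`-offset trail of exactly `2` edges with one endpoint in `S` and the
other in `[n] \ S` is at most `exp(-(1+o(1))·(1+ε)²·s·((n-s)/n)·log n)`. -/
theorem prob_no_crossing_trail (k : ℕ) (hk : 3 ≤ k) (ε : ℝ) (hε : 0 < ε) :
    ∃ δ : ℕ → ℝ, Tendsto δ atTop (nhds 0) ∧
      ∀ (n : ℕ) (S : Finset (Fin n)), 1 ≤ S.card → 2 * S.card ≤ n →
        prH n k
            ((1 + ε) * Real.sqrt (((k - 1).factorial : ℝ) * Real.log n / (n : ℝ) ^ k))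
            (fun E => ¬ HasCrossingTrail n k S E) ≤
          Real.exp (-(1 + δ n) * (1 + ε) ^ 2 * (S.card : ℝ) *
            (((n : ℝ) - (S.card : ℝ)) / (n : ℝ)) * Real.log n) := by
  classical
  have hnp := CrossTrailProof.np_tendsto k hk ε hε
  have hev : ∀ᶠ n : ℕ in atTop, CrossTrailProof.ppN k ε n ≤ 1 := by
    have h2 : ∀ᶠ n : ℕ in atTop, (n : ℝ) * CrossTrailProof.ppN k ε n < 1 :=
      hnp.eventually_lt_const (by norm_num)
    filter_upwards [h2, eventually_ge_atTop 1] with n h1 hn1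
    have hp0 : 0 ≤ CrossTrailProof.ppN k ε n := CrossTrailProof.ppN_nonneg k hε n
    have hn1' : (1 : ℝ) ≤ n := by exact_mod_cast hn1
    nlinarith [mul_le_mul_of_nonneg_right hn1' hp0]
  obtain ⟨N₀, hN₀⟩ := eventually_atTop.1 hev
  refine ⟨fun n => if n < N₀ then CrossTrailProof.dsmall k ε n
    else CrossTrailProof.dmain k ε n, ?_, ?_⟩
  · refine Tendsto.congr' ?_ (CrossTrailProof.dmain_tendsto k hk ε hε)
    filter_upwards [eventually_ge_atTop N₀] with n hn
    rw [if_neg (Nat.not_lt.2 hn)]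
  · intro n S hS1 hS2
    by_cases hc : n < N₀
    · have := CrossTrailProof.small_est k ε hε n S hS1 hS2
      simpa only [if_pos hc, CrossTrailProof.ppN] using this
    · have := CrossTrailProof.main_est k hk ε hε n S hS1 hS2
        (hN₀ n (Nat.not_lt.1 hc))
      simpa only [if_neg hc, CrossTrailProof.ppN] using this
end
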